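/- arXiv:2508.16304 — 4 statements merged into one kernel-verified Lean document; each statement's English description precedes it below -/
import Mathlib

section
/- Let s be a macrostate for the partition Π_V and let s' = s − e(A,q)·(column q) + e(B,q)·(column q) be the macrostate obtained from s by decreasing the count of vertex-state A in cell V_q by one and increasing the count of vertex-state B in cell V_q by one, where A ≠ B (so a transition from s to s' corresponds to a vertex in V_q changing from vertex-state A to vertex-state B). Then the sum over all microstates S in the lumping cell of s and all microstates S' in the lumping cell of s' of Q_{S,S'} equals (∏_{p=1}^P C(N_p; s_p)) · s_{A,q} · { ζ_0^{A,B} + (1/N_q) · Σ_{r=1}^P ( (Σ_{v∈V_q} d^v_r) / (N_r − δ_{q,r}) ) · Σ_{m=1}^M ζ_m^{A,B} ( s_{m,r} − δ_{A,W_m} δ_{q,r} ) }, where δ is the Kronecker delta and, when N_q = 1, the r = q summand is interpreted as 0 (its numerator Σ_{v∈V_q} d^v_q is then 0 since G is simple). Equivalently, dividing by the cell cardinality ∏_p C(N_p; s_p), the lumped generator entry q_{ss'} = (1/|cell(s)|) Σ_{S∈cell(s)} Σ_{S'∈cell(s')} Q_{S,S'} equals s_{A,q}{ ζ_0^{A,B}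 + (1/N_q) Σ_r ((Σ_{v∈V_q} d^v_r)/(N_r − δ_{q,r})) [Σ_m ζ_m^{A,B}(s_{m,r} − δ_{A,W_m}δ_{q,r})] }. -/
open Finset

/-- The set of vertices in partition cell `p`. -/
def cellVerts {V : Type} [Fintype V] {P : ℕ} (part : V → Fin P) (p : Fin P) : Finset V :=
  Finset.univ.filter (fun v => part v = p)

/-- N_p, the number of vertices in partition cell `p`. -/
def Ncell {V : Type} [Fintype V] {P : ℕ} (part : V → Fin P) (p : Fin P) : ℕ :=
  (cellVerts part p).card

/-- d^v_p, the number of neighbours of `v` in partition cell `p`. -/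
def dOf {V : Type} [Fintype V] [DecidableEq V] {P : ℕ} (G : SimpleGraph V)
    [DecidableRel G.Adj] (part : V → Fin P) (v : V) (p : Fin P) : ℕ :=
  ((G.neighborFinset v).filter (fun u => part u = p)).card

/-- The lumping cell of a macrostate `s`: the microstates `S : V → Fin M` such that, for
every vertex-state `m` and cell `p`, the number of vertices `v ∈ V_p` with `S v = m` is
`s m p`. -/
def lumpCell {V : Type} [Fintype V] [DecidableEq V] {M P : ℕ} (part : V → Fin P)
    (s : Fin M → Fin P → ℕ) : Finset (V → Fin M) :=
  Finset.univ.filter (fun S => ∀ m p,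
    (Finset.univ.filter (fun v => part v = p ∧ S v = m)).card = s m p)

/-- Number of neighbours of `v` whose state under `S` is `m`. -/
def nbr {V : Type} [Fintype V] [DecidableEq V] {M : ℕ} (G : SimpleGraph V)
    [DecidableRel G.Adj] (S : V → Fin M) (v : V) (m : Fin M) : ℕ :=
  ((G.neighborFinset v).filter (fun u => S u = m)).card

/-- The affine transition rate R_{A,B}(n₁,…,n_M) = ζ₀^{A,B} + Σₘ ζₘ^{A,B} nₘ. -/
def rate {M : ℕ} (ζ0 : Fin M → Fin M → ℝ) (ζ : Fin M → Fin M → Fin M → ℝ)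
    (A B : Fin M) (nc : Fin M → ℕ) : ℝ :=
  ζ0 A B + ∑ m, ζ A B m * (nc m : ℝ)

/-- The infinitesimal generator `Q` of the single-vertex-transition Markov chain:
`Q S S'` is the affine rate `R_{S(v),S'(v)}` evaluated at the neighbourhood counts of the
unique differing vertex `v` when `S, S'` differ at exactly one vertex, and `0` otherwise. -/
def Qmat {V : Type} [Fintype V] [DecidableEq V] {M : ℕ} (G : SimpleGraph V)
    [DecidableRel G.Adj] (ζ0 : Fin M → Fin M → ℝ) (ζ : Fin M → Fin M → Fin M → ℝ)
    (S S' : V → Fin M) : ℝ :=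
  if (Finset.univ.filter (fun v => S v ≠ S' v)).card = 1 then
    ∑ v ∈ Finset.univ.filter (fun v => S v ≠ S' v),
      rate ζ0 ζ (S v) (S' v) (nbr G S v)
  else 0

section Aux

variable {V : Type} [Fintype V] [DecidableEq V] {M P : ℕ} (part : V → Fin P)

lemma swap_preserve {a b : V} (hab : part a = part b) (x : V) :
    part (Equiv.swap a b x) = part x := by
  rcases eq_or_ne x a with rfl | hxa
  · simp [hab]
  rcases eq_or_ne x b with rfl | hxb
  · simp [hab]
  · rw [Equiv.swap_apply_of_ne_of_ne hxa hxb]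

lemma mem_lump_iff {s : Fin M → Fin P → ℕ} {S : V → Fin M} :
    S ∈ lumpCell part s ↔ ∀ m p,
      (Finset.univ.filter (fun v => part v = p ∧ S v = m)).card = s m p := by
  simp [lumpCell]

lemma count_perm (π : Equiv.Perm V) (hπ : ∀ v, part (π v) = part v)
    (S : V → Fin M) (m : Fin M) (p : Fin P) :
    (Finset.univ.filter (fun v => part v = p ∧ S (π v) = m)).card
      = (Finset.univ.filter (fun v => part v = p ∧ S v = m)).card :=
  Finset.card_equiv π (by intro v; simp [hπ v])

lemma lump_perm (π : Equiv.Perm V) (hπ : ∀ v, part (π v) = part v)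
    (s : Fin M → Fin P → ℕ) (S : V → Fin M) :
    S ∘ π ∈ lumpCell part s ↔ S ∈ lumpCell part s := by
  simp only [mem_lump_iff]
  refine forall_congr' fun m => forall_congr' fun p => ?_
  simp only [Function.comp_apply, count_perm part π hπ S m p]

lemma pair_count_eq (s : Fin M → Fin P → ℕ) (A0 m : Fin M) {v u v' u' : V}
    (hv : part v = part v') (hu : part u = part u') (hvu : v ≠ u) (hvu' : v' ≠ u') :
    ((lumpCell part s).filter (fun S => S v = A0 ∧ S u = m)).card
      = ((lumpCell part s).filter (fun S => S v' = A0 ∧ S u' = m)).card := by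
  classical
  set σ : Equiv.Perm V := Equiv.swap v v' with hσ
  set w : V := σ u with hw
  set τ : Equiv.Perm V := Equiv.swap w u' with hτ
  set π : Equiv.Perm V := σ.trans τ with hπdef
  have hwv' : w ≠ v' := by
    simp only [hw]
    intro h
    exact hvu (σ.injective (by simpa [hσ] using h)).symm
  have hpw : part w = part u := swap_preserve part hv u
  have hπ : ∀ x, part (π x) = part x := by
    intro x
    have h1 : part (τ (σ x)) = part (σ x) := swap_preserve part (hpw.trans hu) (σ x)
    have h2 : part (σ x) = part x := swap_preserve part hv x
    simpa [hπdef] using h1.trans h2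
  have hπv : π v = v' := by
    have : σ v = v' := Equiv.swap_apply_left v v'
    simp only [hπdef, Equiv.trans_apply, this, hτ]
    exact Equiv.swap_apply_of_ne_of_ne (Ne.symm hwv') hvu'
  have hπu : π u = u' := by
    simp only [hπdef, Equiv.trans_apply, ← hw, hτ]
    exact Equiv.swap_apply_left w u'
  let e : (V → Fin M) ≃ (V → Fin M) :=
    { toFun := fun S => S ∘ π, invFun := fun S => S ∘ π.symm,
      left_inv := fun S => by funext x; simp, right_inv := fun S => by funext x; simp }
  refine (Finset.card_equiv e ?_).symm
  intro S
  simp only [Finset.mem_filter]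
  have hmem := lump_perm part π hπ s S
  show _ ↔ (S ∘ π ∈ lumpCell part s ∧ (S ∘ π) v = A0 ∧ (S ∘ π) u = m)
  have e1 : (S ∘ π) v = S v' := by simp [Function.comp, hπv]
  have e2 : (S ∘ π) u = S u' := by simp [Function.comp, hπu]
  rw [hmem, e1, e2]

end Aux

section Aux2

variable {V : Type} [Fintype V] [DecidableEq V] {M P : ℕ} (part : V → Fin P)

lemma mem_cellVerts {v : V} {p : Fin P} : v ∈ cellVerts part p ↔ part v = p := by
  simp [cellVerts]

lemma count_cell {s : Fin M → Fin P → ℕ} {S : V → Fin M} (hS : S ∈ lumpCell part s)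
    (m : Fin M) (p : Fin P) :
    ((cellVerts part p).filter (fun v => S v = m)).card = s m p := by
  rw [cellVerts, Finset.filter_filter]
  exact (mem_lump_iff part).mp hS m p

lemma pair_double_count (s : Fin M → Fin P → ℕ) (A0 m : Fin M) (q r : Fin P) :
    ∑ v ∈ cellVerts part q, ∑ u ∈ (cellVerts part r).erase v,
      ((lumpCell part s).filter (fun S => S v = A0 ∧ S u = m)).card
    = (lumpCell part s).card * (s A0 q * (s m r - if q = r ∧ A0 = m then 1 else 0)) := by
  classical
  have key : ∀ S ∈ lumpCell part s,
      (∑ v ∈ cellVerts part q, ∑ u ∈ (cellVerts part r).erase v,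
        (if S v = A0 ∧ S u = m then 1 else 0))
      = s A0 q * (s m r - if q = r ∧ A0 = m then 1 else 0) := by
    intro S hS
    have step1 : ∀ v ∈ cellVerts part q,
        (∑ u ∈ (cellVerts part r).erase v, (if S v = A0 ∧ S u = m then 1 else 0))
        = if S v = A0 then (s m r - if q = r ∧ A0 = m then 1 else 0) else 0 := by
      intro v hv
      by_cases hvA : S v = A0
      · simp only [hvA, true_and, if_pos rfl]
        have : (∑ u ∈ (cellVerts part r).erase v, if S u = m then (1:ℕ) else 0)
            = (((cellVerts part r).erase v).filter (fun u => S u = m)).card := by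
          rw [Finset.card_filter]
        rw [this, Finset.filter_erase]
        have hcf : ((cellVerts part r).filter (fun u => S u = m)).card = s m r :=
          count_cell part hS m r
        by_cases hmem2 : v ∈ (cellVerts part r).filter (fun u => S u = m)
        · rw [Finset.card_erase_of_mem hmem2, hcf]
          have : (q = r ∧ A0 = m) := by
            rcases Finset.mem_filter.mp hmem2 with ⟨hvr, hvm⟩
            exact ⟨((mem_cellVerts part).mp hv).symm.trans ((mem_cellVerts part).mp hvr),
              hvA ▸ hvm⟩
          simp [this]
        · rw [Finset.erase_eq_of_notMem hmem2, hcf]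
          have : ¬(q = r ∧ A0 = m) := by
            rintro ⟨hqr, hAm⟩
            exact hmem2 (Finset.mem_filter.mpr ⟨(mem_cellVerts part).mpr
              (by rw [(mem_cellVerts part).mp hv, hqr]), by rw [hvA, hAm]⟩)
          simp [this]
      · simp [hvA]
    rw [Finset.sum_congr rfl step1]
    have : (∑ v ∈ cellVerts part q,
        if S v = A0 then (s m r - if q = r ∧ A0 = m then 1 else 0) else 0)
        = ((cellVerts part q).filter (fun v => S v = A0)).card
          * (s m r - if q = r ∧ A0 = m then 1 else 0) := by
      rw [← Finset.sum_filter]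
      simp [Finset.sum_const, mul_comm]
    rw [this, count_cell part hS A0 q]
  calc ∑ v ∈ cellVerts part q, ∑ u ∈ (cellVerts part r).erase v,
        ((lumpCell part s).filter (fun S => S v = A0 ∧ S u = m)).card
      = ∑ v ∈ cellVerts part q, ∑ u ∈ (cellVerts part r).erase v,
        ∑ S ∈ lumpCell part s, (if S v = A0 ∧ S u = m then 1 else 0) := by
        refine Finset.sum_congr rfl fun v _ => Finset.sum_congr rfl fun u _ => ?_
        rw [Finset.card_filter]
    _ = ∑ S ∈ lumpCell part s, ∑ v ∈ cellVerts part q, ∑ u ∈ (cellVerts part r).erase v,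
        (if S v = A0 ∧ S u = m then 1 else 0) := by
        rw [Finset.sum_comm]
        refine Finset.sum_congr rfl fun v _ => Finset.sum_comm
    _ = ∑ S ∈ lumpCell part s, (s A0 q * (s m r - if q = r ∧ A0 = m then 1 else 0)) :=
        Finset.sum_congr rfl key
    _ = _ := by rw [Finset.sum_const, smul_eq_mul]

lemma pair_formula (s : Fin M → Fin P → ℕ) (A0 m : Fin M) {q r : Fin P} {v u : V}
    (hv : v ∈ cellVerts part q) (hu : u ∈ cellVerts part r) (hne : v ≠ u) :
    ((lumpCell part s).filter (fun S => S v = A0 ∧ S u = m)).card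
        * (Ncell part q * (Ncell part r - if q = r then 1 else 0))
    = (lumpCell part s).card * (s A0 q * (s m r - if q = r ∧ A0 = m then 1 else 0)) := by
  classical
  rw [← pair_double_count part s A0 m q r]
  have hconst : ∀ v' ∈ cellVerts part q, ∀ u' ∈ (cellVerts part r).erase v',
      ((lumpCell part s).filter (fun S => S v' = A0 ∧ S u' = m)).card
      = ((lumpCell part s).filter (fun S => S v = A0 ∧ S u = m)).card := by
    intro v' hv' u' hu'
    refine pair_count_eq part s A0 m ?_ ?_ (Finset.ne_of_mem_erase hu').symm hne
    · exact ((mem_cellVerts part).mp hv').trans ((mem_cellVerts part).mp hv).symm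
    · exact ((mem_cellVerts part).mp (Finset.mem_of_mem_erase hu')).trans
        ((mem_cellVerts part).mp hu).symm
  rw [Finset.sum_congr rfl (fun v' hv' => Finset.sum_congr rfl (hconst v' hv'))]
  have : ∀ v' ∈ cellVerts part q, ((cellVerts part r).erase v').card
      = Ncell part r - (if q = r then 1 else 0) := by
    intro v' hv'
    by_cases hqr : q = r
    · rw [Finset.card_erase_of_mem (by rw [← hqr]; exact hv'), if_pos hqr]; rfl
    · rw [Finset.erase_eq_of_notMem, if_neg hqr, Nat.sub_zero]; rfl
      intro hmem
      exact hqr (((mem_cellVerts part).mp hv').symm.trans ((mem_cellVerts part).mp hmem))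
  simp only [Finset.sum_const, smul_eq_mul]
  rw [Finset.sum_congr rfl fun v' hv' => by rw [this v' hv']]
  rw [Finset.sum_const, smul_eq_mul]
  have hN : (cellVerts part q).card = Ncell part q := rfl
  rw [hN]; ring

end Aux2

section Aux3

variable {V : Type} [Fintype V] [DecidableEq V] {M P : ℕ} (part : V → Fin P)

lemma flip_mem (s s' : Fin M → Fin P → ℕ) (A B : Fin M) (q : Fin P) (hAB : A ≠ B)
    (hs' : ∀ m p, (s' m p : ℤ) = (s m p : ℤ) - (if m = A ∧ p = q then 1 else 0)
      + (if m = B ∧ p = q then 1 else 0))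
    {S : V → Fin M} (hS : S ∈ lumpCell part s) {v : V} (hv : part v = q) (hvA : S v = A) :
    Function.update S v B ∈ lumpCell part s' := by
  classical
  rw [mem_lump_iff] at hS ⊢
  intro m p
  have hvF : v ∈ Finset.univ.filter (fun w => part w = p ∧ S w = A) ↔ p = q := by
    simp [hv, hvA, eq_comm]
  by_cases hpq : p = q
  · subst hpq
    rcases eq_or_ne m A with hmA | hmA
    · rw [hmA]
      have hset : Finset.univ.filter (fun w => part w = p ∧ Function.update S v B w = A)
          = (Finset.univ.filter (fun w => part w = p ∧ S w = A)).erase v := by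
        ext w
        rcases eq_or_ne w v with rfl | hwv
        · simp [Function.update_self, (Ne.symm hAB)]
        · simp [Function.update_of_ne hwv, hwv]
      have hvmem : v ∈ Finset.univ.filter (fun w => part w = p ∧ S w = A) := hvF.mpr rfl
      have hpos : 1 ≤ s A p := by
        rw [← hS A p]
        exact Finset.card_pos.mpr ⟨v, hvmem⟩ 
      have : (s' A p : ℤ) = (s A p : ℤ) - 1 := by
        rw [hs' A p]
        simp [hAB]
      rw [hset, Finset.card_erase_of_mem hvmem, hS A p]
      omega
    rcases eq_or_ne m B with hmB | hmB
    · rw [hmB]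
      have hset : Finset.univ.filter (fun w => part w = p ∧ Function.update S v B w = B)
          = insert v (Finset.univ.filter (fun w => part w = p ∧ S w = B)) := by
        ext w
        rcases eq_or_ne w v with rfl | hwv
        · simp [Function.update_self, hv]
        · simp [Function.update_of_ne hwv, hwv]
      have hvnot : v ∉ Finset.univ.filter (fun w => part w = p ∧ S w = B) := by
        simp [hvA, hAB]
      have : (s' B p : ℤ) = (s B p : ℤ) + 1 := by
        rw [hs' B p]
        simp [Ne.symm hAB]
      rw [hset, Finset.card_insert_of_notMem hvnot, hS B p]
      omega
    · have hset : Finset.univ.filter (fun w => part w = p ∧ Function.update S v B w = m)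
          = Finset.univ.filter (fun w => part w = p ∧ S w = m) := by
        ext w
        rcases eq_or_ne w v with rfl | hwv
        · simp [Function.update_self, Ne.symm hmB, hvA, Ne.symm hmA]
        · simp [Function.update_of_ne hwv]
      have : (s' m p : ℤ) = (s m p : ℤ) := by
        rw [hs' m p]
        simp [hmA, hmB]
      rw [hset, hS m p]
      omega
  · have hset : Finset.univ.filter (fun w => part w = p ∧ Function.update S v B w = m)
        = Finset.univ.filter (fun w => part w = p ∧ S w = m) := by
      ext w
      rcases eq_or_ne w v with rfl | hwv
      · simp only [Finset.mem_filter, Finset.mem_univ, true_and, Function.update_self]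
        constructor <;> rintro ⟨h1, _⟩ <;> exact absurd (hv.symm.trans h1) (fun hh => hpq hh.symm)
      · simp [Function.update_of_ne hwv]
    have : (s' m p : ℤ) = (s m p : ℤ) := by
      rw [hs' m p]
      simp [hpq]
    rw [hset, hS m p]
    omega

lemma diff_one_char (s s' : Fin M → Fin P → ℕ) (A B : Fin M) (q : Fin P) (hAB : A ≠ B)
    (hs' : ∀ m p, (s' m p : ℤ) = (s m p : ℤ) - (if m = A ∧ p = q then 1 else 0)
      + (if m = B ∧ p = q then 1 else 0))
    {S S' : V → Fin M} (hS : S ∈ lumpCell part s) (hS' : S' ∈ lumpCell part s')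
    (hd : (Finset.univ.filter (fun v => S v ≠ S' v)).card = 1) :
    ∃ v, part v = q ∧ S v = A ∧ S' = Function.update S v B := by
  classical
  rw [mem_lump_iff] at hS hS'
  obtain ⟨v, hv⟩ := Finset.card_eq_one.mp hd
  have hvne : S v ≠ S' v := by
    have : v ∈ Finset.univ.filter (fun w => S w ≠ S' w) := by rw [hv]; exact Finset.mem_singleton_self v
    simpa using this
  have hagree : ∀ w, w ≠ v → S w = S' w := by
    intro w hw
    by_contra hne
    have : w ∈ Finset.univ.filter (fun x => S x ≠ S' x) := by simpa using hne
    rw [hv, Finset.mem_singleton] at this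
    exact hw this
  have hsame : ∀ m p, (p ≠ part v ∨ (m ≠ S v ∧ m ≠ S' v)) → s m p = s' m p := by
    intro m p hcond
    rw [← hS m p, ← hS' m p]
    congr 1
    ext w
    rcases eq_or_ne w v with rfl | hwv
    · rcases hcond with h | ⟨h1, h2⟩
      · simp only [Finset.mem_filter, Finset.mem_univ, true_and]
        constructor <;> rintro ⟨hx, _⟩ <;> exact absurd hx.symm h
      · simp [Ne.symm h1, Ne.symm h2]
    · simp [hagree w hwv]
  -- s' A q ≠ s A q
  have hAq : (s' A q : ℤ) = (s A q : ℤ) - 1 := by rw [hs' A q]; simp [hAB]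
  have hBq : (s' B q : ℤ) = (s B q : ℤ) + 1 := by rw [hs' B q]; simp [Ne.symm hAB]
  have hpv : part v = q := by
    by_contra hpq
    have := hsame A q (Or.inl (fun h => hpq h.symm))
    omega
  -- fiber of (S v) at cell q loses v, fiber of (S' v) gains v
  have hSv : S v = A := by
    have hsub : (s' (S v) q : ℤ) = (s (S v) q : ℤ) - 1 := by
      have hset : Finset.univ.filter (fun w => part w = q ∧ S' w = S v)
          = (Finset.univ.filter (fun w => part w = q ∧ S w = S v)).erase v := by
        ext w
        rcases eq_or_ne w v with rfl | hwv
        · simp [Ne.symm hvne]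
        · simp [hagree w hwv, hwv]
      have hvmem : v ∈ Finset.univ.filter (fun w => part w = q ∧ S w = S v) := by
        simp [hpv]
      have h1 := hS (S v) q
      have h2 := hS' (S v) q
      rw [hset, Finset.card_erase_of_mem hvmem, h1] at h2
      have hpos : 1 ≤ s (S v) q := by
        rw [← h1]; exact Finset.card_pos.mpr ⟨v, hvmem⟩
      omega
    by_contra hSvA
    have h1 : (s' (S v) q : ℤ) = s (S v) q + (if S v = B ∧ q = q then 1 else 0) := by
      rw [hs' (S v) q]
      simp [hSvA]
    have h2 : (if S v = B ∧ q = q then (1:ℤ) else 0) = 0 ∨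
        (if S v = B ∧ q = q then (1:ℤ) else 0) = 1 := by
      split <;> simp
    rcases h2 with h2 | h2 <;> rw [h2] at h1 <;> omega
  have hS'v : S' v = B := by
    have hsub : (s' (S' v) q : ℤ) = (s (S' v) q : ℤ) + 1 := by
      have hset : Finset.univ.filter (fun w => part w = q ∧ S' w = S' v)
          = insert v (Finset.univ.filter (fun w => part w = q ∧ S w = S' v)) := by
        ext w
        rcases eq_or_ne w v with rfl | hwv
        · simp [hpv]
        · simp [hagree w hwv, hwv]
      have hvnot : v ∉ Finset.univ.filter (fun w => part w = q ∧ S w = S' v) := by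
        simp [hpv, hvne]
      have h1 := hS (S' v) q
      have h2 := hS' (S' v) q
      rw [hset, Finset.card_insert_of_notMem hvnot, h1] at h2
      omega
    by_contra hSvB
    have h1 : (s' (S' v) q : ℤ) = s (S' v) q - (if S' v = A ∧ q = q then 1 else 0) := by
      rw [hs' (S' v) q]
      simp [hSvB]
    have h2 : (if S' v = A ∧ q = q then (1:ℤ) else 0) = 0 ∨
        (if S' v = A ∧ q = q then (1:ℤ) else 0) = 1 := by
      split <;> simp
    rcases h2 with h2 | h2 <;> rw [h2] at h1 <;> omega
  refine ⟨v, hpv, hSv, ?_⟩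
  funext w
  rcases eq_or_ne w v with rfl | hwv
  · rw [Function.update_self, hS'v]
  · rw [Function.update_of_ne hwv, hagree w hwv]

end Aux3

section Aux4

open scoped Nat

variable {V : Type} [Fintype V] [DecidableEq V] {M P : ℕ} (part : V → Fin P)

lemma move_count (s s' : Fin M → Fin P → ℕ) (A B : Fin M) (q : Fin P) (hAB : A ≠ B)
    (hs' : ∀ m p, (s' m p : ℤ) = (s m p : ℤ) - (if m = A ∧ p = q then 1 else 0)
      + (if m = B ∧ p = q then 1 else 0)) :
    s A q * (lumpCell part s).card = s' B q * (lumpCell part s').card := by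
  classical
  have hs_rev : ∀ m p, (s m p : ℤ) = (s' m p : ℤ) - (if m = B ∧ p = q then 1 else 0)
      + (if m = A ∧ p = q then 1 else 0) := by
    intro m p
    have := hs' m p
    linarith
  have h1 : s A q * (lumpCell part s).card
      = ∑ S ∈ lumpCell part s, ((cellVerts part q).filter (fun v => S v = A)).card := by
    rw [Finset.sum_congr rfl (fun S hS => count_cell part hS A q), Finset.sum_const,
      smul_eq_mul, mul_comm]
  have h2 : s' B q * (lumpCell part s').card
      = ∑ S ∈ lumpCell part s', ((cellVerts part q).filter (fun v => S v = B)).card := by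
    rw [Finset.sum_congr rfl (fun S hS => count_cell part hS B q), Finset.sum_const,
      smul_eq_mul, mul_comm]
  rw [h1, h2, ← Finset.card_sigma, ← Finset.card_sigma]
  refine Finset.card_nbij' (fun x => ⟨Function.update x.1 x.2 B, x.2⟩)
    (fun x => ⟨Function.update x.1 x.2 A, x.2⟩) ?_ ?_ ?_ ?_
  · rintro ⟨S, v⟩ hx
    rw [Finset.mem_coe, Finset.mem_sigma] at hx ⊢
    obtain ⟨hS, hv⟩ := hx
    rw [Finset.mem_filter] at hv
    refine ⟨flip_mem part s s' A B q hAB hs' hS ((mem_cellVerts part).mp hv.1) hv.2, ?_⟩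
    rw [Finset.mem_filter]
    exact ⟨hv.1, Function.update_self v B S⟩
  · rintro ⟨S, v⟩ hx
    rw [Finset.mem_coe, Finset.mem_sigma] at hx ⊢
    obtain ⟨hS, hv⟩ := hx
    rw [Finset.mem_filter] at hv
    refine ⟨flip_mem part s' s B A q hAB.symm hs_rev hS ((mem_cellVerts part).mp hv.1) hv.2, ?_⟩
    rw [Finset.mem_filter]
    exact ⟨hv.1, Function.update_self v A S⟩
  · rintro ⟨S, v⟩ hx
    rw [Finset.mem_coe, Finset.mem_sigma, Finset.mem_filter] at hx
    have : Function.update (Function.update S v B) v A = S := by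
      rw [Function.update_idem, ← hx.2.2]
      exact Function.update_eq_self v S
    simp [this]
  · rintro ⟨S, v⟩ hx
    rw [Finset.mem_coe, Finset.mem_sigma, Finset.mem_filter] at hx
    have : Function.update (Function.update S v A) v B = S := by
      rw [Function.update_idem, ← hx.2.2]
      exact Function.update_eq_self v S
    simp [this]

lemma mult_rec {M : ℕ} (a a' : Fin M → ℕ) (A B : Fin M) (hAB : A ≠ B) (hA : 1 ≤ a A)
    (h'A : a' A = a A - 1) (h'B : a' B = a B + 1) (h'o : ∀ m, m ≠ A → m ≠ B → a' m = a m) :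
    a A * Nat.multinomial Finset.univ a = (a B + 1) * Nat.multinomial Finset.univ a' := by
  classical
  have hBmem : B ∈ (Finset.univ : Finset (Fin M)).erase A :=
    Finset.mem_erase.mpr ⟨hAB.symm, Finset.mem_univ B⟩
  have hprodsplit : ∀ f : Fin M → ℕ,
      ∏ m, f m = f A * (f B * ∏ m ∈ (Finset.univ.erase A).erase B, f m) := by
    intro f
    rw [Finset.mul_prod_erase _ f hBmem, Finset.mul_prod_erase _ f (Finset.mem_univ A)]
  have hrest : ∏ m ∈ (Finset.univ.erase A).erase B, a' m
      = ∏ m ∈ (Finset.univ.erase A).erase B, a m := by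
    refine Finset.prod_congr rfl fun m hm => ?_
    rw [Finset.mem_erase, Finset.mem_erase] at hm
    exact h'o m hm.2.1 hm.1
  have hsum : ∑ m, a' m = ∑ m, a m := by
    have e1 : ∑ m, a' m = a' A + (a' B + ∑ m ∈ (Finset.univ.erase A).erase B, a' m) := by
      rw [Finset.add_sum_erase _ a' hBmem, Finset.add_sum_erase _ a' (Finset.mem_univ A)]
    have e2 : ∑ m, a m = a A + (a B + ∑ m ∈ (Finset.univ.erase A).erase B, a m) := by
      rw [Finset.add_sum_erase _ a hBmem, Finset.add_sum_erase _ a (Finset.mem_univ A)]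
    have hrest2 : ∑ m ∈ (Finset.univ.erase A).erase B, a' m
        = ∑ m ∈ (Finset.univ.erase A).erase B, a m := by
      refine Finset.sum_congr rfl fun m hm => ?_
      rw [Finset.mem_erase, Finset.mem_erase] at hm
      exact h'o m hm.2.1 hm.1
    rw [e1, e2, hrest2, h'A, h'B]
    omega
  have hfact : a A * ∏ m, (a' m)! = (a B + 1) * ∏ m, (a m)! := by
    rw [hprodsplit (fun m => (a' m)!), hprodsplit (fun m => (a m)!)]
    have hre : ∏ m ∈ (Finset.univ.erase A).erase B, (a' m)!
        = ∏ m ∈ (Finset.univ.erase A).erase B, (a m)! := by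
      refine Finset.prod_congr rfl fun m hm => ?_
      rw [Finset.mem_erase, Finset.mem_erase] at hm
      rw [h'o m hm.2.1 hm.1]
    rw [hre, h'A, h'B]
    have e1 : a A * (a A - 1)! = (a A)! := Nat.mul_factorial_pred (by omega)
    have e2 : (a B + 1)! = (a B + 1) * (a B)! := Nat.factorial_succ (a B)
    calc a A * ((a A - 1)! * ((a B + 1)! * ∏ m ∈ (Finset.univ.erase A).erase B, (a m)!))
        = (a A * (a A - 1)!) * ((a B + 1)! * ∏ m ∈ (Finset.univ.erase A).erase B, (a m)!) := by
          ring
      _ = (a A)! * ((a B + 1) * (a B)! * ∏ m ∈ (Finset.univ.erase A).erase B, (a m)!) := by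
          rw [e1, e2]
      _ = (a B + 1) * ((a A)! * ((a B)! * ∏ m ∈ (Finset.univ.erase A).erase B, (a m)!)) := by
          ring
  have spec1 := Nat.multinomial_spec Finset.univ a
  have spec2 := Nat.multinomial_spec Finset.univ a'
  have key : (a A * Nat.multinomial Finset.univ a) * ((∏ m, (a' m)!) * (∏ m, (a m)!))
      = ((a B + 1) * Nat.multinomial Finset.univ a') * ((∏ m, (a' m)!) * (∏ m, (a m)!)) := by
    calc (a A * Nat.multinomial Finset.univ a) * ((∏ m, (a' m)!) * (∏ m, (a m)!))
        = (a A * ∏ m, (a' m)!) * ((∏ m, (a m)!) * Nat.multinomial Finset.univ a) := by ring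
      _ = ((a B + 1) * ∏ m, (a m)!) * (∑ m, a m)! := by rw [hfact, spec1]
      _ = ((a B + 1) * ∏ m, (a m)!) * (∑ m, a' m)! := by rw [hsum]
      _ = ((a B + 1) * ∏ m, (a m)!) * ((∏ m, (a' m)!) * Nat.multinomial Finset.univ a') := by
          rw [spec2]
      _ = ((a B + 1) * Nat.multinomial Finset.univ a') * ((∏ m, (a' m)!) * (∏ m, (a m)!)) := by
          ring
  have hpos : 0 < (∏ m, (a' m)!) * (∏ m, (a m)!) :=
    Nat.mul_pos (Finset.prod_pos fun m _ => Nat.factorial_pos _)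
      (Finset.prod_pos fun m _ => Nat.factorial_pos _)
  exact Nat.eq_of_mul_eq_mul_right hpos key

end Aux4

section Aux5

open scoped Nat

variable {V : Type} [Fintype V] [DecidableEq V] {M P : ℕ} (part : V → Fin P)

lemma card_lump (hM : 1 ≤ M) (s : Fin M → Fin P → ℕ)
    (hs : ∀ p, ∑ m, s m p = Ncell part p) :
    (lumpCell part s).card = ∏ p, Nat.multinomial Finset.univ (fun m => s m p) := by
  classical
  suffices H : ∀ n (s : Fin M → Fin P → ℕ), (∀ p, ∑ m, s m p = Ncell part p) →
      (∑ p, ∑ m, m.val * s m p) = n →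
      (lumpCell part s).card = ∏ p, Nat.multinomial Finset.univ (fun m => s m p) by
    exact H _ s hs rfl
  intro n
  induction n using Nat.strong_induction_on with
  | _ n ih =>
    intro s hs hw
    set z0 : Fin M := ⟨0, hM⟩ with hz0def
    by_cases hz : ∀ p m, m.val * s m p = 0
    · have hzero : ∀ m, m ≠ z0 → ∀ p, s m p = 0 := by
        intro m hm p
        have hmv : m.val ≠ 0 := by
          intro h
          exact hm (Fin.ext h)
        rcases Nat.mul_eq_zero.mp (hz p m) with h | h
        · exact absurd h hmv
        · exact h
      have hsingle : ∀ p, (∑ m, s m p) = s z0 p := fun p =>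
        Finset.sum_eq_single z0 (fun m _ hm => hzero m hm p)
          (fun h => absurd (Finset.mem_univ z0) h)
      have hz0 : ∀ p, s z0 p = Ncell part p := fun p => (hsingle p).symm.trans (hs p)
      have hcell : lumpCell part s = {fun _ => z0} := by
        ext S
        rw [mem_lump_iff, Finset.mem_singleton]
        constructor
        · intro h
          funext v
          by_contra hne
          have hc := h (S v) (part v)
          rw [hzero (S v) hne (part v), Finset.card_eq_zero] at hc
          have hv : v ∈ Finset.univ.filter (fun w => part w = part v ∧ S w = S v) := by
            simp
          rw [hc] at hv
          simp at hv
        · rintro rfl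
          intro m p
          by_cases hm : m = z0
          · subst hm
            have : (Finset.univ.filter (fun v : V => part v = p ∧ z0 = z0))
                = Finset.univ.filter (fun v : V => part v = p) := by
              simp
            rw [this, hz0 p]
            rfl
          · have : (Finset.univ.filter (fun v : V => part v = p ∧ z0 = m)) = ∅ := by
              rw [Finset.filter_eq_empty_iff]
              exact fun v _ hc => hm hc.2.symm
            rw [this, Finset.card_empty, hzero m hm p]
      rw [hcell, Finset.card_singleton]
      symm
      refine Finset.prod_eq_one fun p _ => ?_
      have hspec := Nat.multinomial_spec (Finset.univ) (fun m => s m p)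
      have hprod : (∏ m, (s m p)!) = (s z0 p)! := by
        rw [← Finset.mul_prod_erase _ _ (Finset.mem_univ z0)]
        have : ∏ m ∈ Finset.univ.erase z0, (s m p)! = 1 :=
          Finset.prod_eq_one fun m hm => by
            rw [hzero m (Finset.mem_erase.mp hm).1 p]; rfl
        rw [this, mul_one]
      rw [hprod, hsingle p] at hspec
      have : (s z0 p)! * Nat.multinomial Finset.univ (fun m => s m p) = (s z0 p)! * 1 := by
        rw [hspec, mul_one]
      exact Nat.eq_of_mul_eq_mul_left (Nat.factorial_pos _) this
    · push_neg at hz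
      obtain ⟨p0, m0, hmz⟩ := hz
      have hm0 : m0.val ≠ 0 := fun h => hmz (by simp [h])
      have hs0 : s m0 p0 ≠ 0 := fun h => hmz (by simp [h])
      have hm0z : m0 ≠ z0 := fun h => hm0 (by rw [h])
      set s2 : Fin M → Fin P → ℕ := fun m p => if m = m0 ∧ p = p0 then s m p - 1
        else if m = z0 ∧ p = p0 then s m p + 1 else s m p with hs2def
      have hpos : 1 ≤ s m0 p0 := Nat.pos_of_ne_zero hs0
      have hs2' : ∀ m p, (s2 m p : ℤ) = (s m p : ℤ) - (if m = m0 ∧ p = p0 then 1 else 0)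
          + (if m = z0 ∧ p = p0 then 1 else 0) := by
        intro m p
        by_cases h1 : m = m0 ∧ p = p0
        · have h2 : ¬(m = z0 ∧ p = p0) := fun hh => hm0z (h1.1.symm.trans hh.1)
          have hge : 1 ≤ s m p := by rw [h1.1, h1.2]; exact hpos
          simp only [hs2def, if_pos h1, if_neg h2]
          omega
        · by_cases h2 : m = z0 ∧ p = p0
          · simp only [hs2def, if_neg h1, if_pos h2]
            omega
          · simp only [hs2def, if_neg h1, if_neg h2]
            omega
      have hs2sum : ∀ p, ∑ m, s2 m p = Ncell part p := by
        intro p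
        rw [← hs p]
        have hcast : (↑(∑ m, s2 m p) : ℤ) = ↑(∑ m, s m p) := by
          rw [Nat.cast_sum, Nat.cast_sum, Finset.sum_congr rfl (fun m _ => hs2' m p),
            Finset.sum_add_distrib, Finset.sum_sub_distrib]
          have hA : ∑ m, (if m = m0 ∧ p = p0 then (1:ℤ) else 0)
              = if p = p0 then 1 else 0 := by
            by_cases hp : p = p0 <;> simp [hp]
          have hB : ∑ m, (if m = z0 ∧ p = p0 then (1:ℤ) else 0)
              = if p = p0 then 1 else 0 := by
            by_cases hp : p = p0 <;> simp [hp]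
          rw [hA, hB]
          ring
        exact_mod_cast hcast
      have hle : ∀ (m : Fin M) (p : Fin P), m.val * s2 m p ≤ m.val * s m p := by
        intro m p
        by_cases h1 : m = m0 ∧ p = p0
        · simp only [hs2def, if_pos h1]
          exact Nat.mul_le_mul_left _ (Nat.sub_le _ _)
        · by_cases h2 : m = z0 ∧ p = p0
          · have hz0v : z0.val = 0 := rfl; simp [hs2def, h2.1, h2.2, Ne.symm hm0z, hz0v]
          · simp only [hs2def, if_neg h1, if_neg h2]
            exact le_refl _
      have hwt : (∑ p, ∑ m, m.val * s2 m p) < n := by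
        rw [← hw]
        refine Finset.sum_lt_sum (fun p _ => Finset.sum_le_sum fun m _ => hle m p)
          ⟨p0, Finset.mem_univ p0, Finset.sum_lt_sum (fun m _ => hle m p0)
            ⟨m0, Finset.mem_univ m0, ?_⟩⟩
        have h2 : s2 m0 p0 = s m0 p0 - 1 := by simp [hs2def]
        rw [h2]
        exact Nat.mul_lt_mul_of_pos_left (Nat.sub_lt (Nat.pos_of_ne_zero hs0) one_pos)
          (Nat.pos_of_ne_zero hm0)
      have hmove := move_count part s s2 m0 z0 p0 hm0z hs2'
      have hs2zB : s2 z0 p0 = s z0 p0 + 1 := by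
        have hzm : ¬(z0 = m0 ∧ p0 = p0) := fun hh => hm0z hh.1.symm
        simp only [hs2def, if_neg hzm]
        simp
      have hih := ih _ hwt s2 hs2sum rfl
      have hmult : s m0 p0 * ∏ p, Nat.multinomial Finset.univ (fun m => s m p)
          = (s z0 p0 + 1) * ∏ p, Nat.multinomial Finset.univ (fun m => s2 m p) := by
        rw [← Finset.mul_prod_erase _ _ (Finset.mem_univ p0),
          ← Finset.mul_prod_erase _ (fun p => Nat.multinomial Finset.univ (fun m => s2 m p))
            (Finset.mem_univ p0)]
        have hrest : ∏ p ∈ Finset.univ.erase p0, Nat.multinomial Finset.univ (fun m => s2 m p)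
            = ∏ p ∈ Finset.univ.erase p0, Nat.multinomial Finset.univ (fun m => s m p) := by
          refine Finset.prod_congr rfl fun p hp => ?_
          have hp0 : p ≠ p0 := (Finset.mem_erase.mp hp).1
          congr 1
          funext m
          simp [hs2def, hp0]
        rw [hrest]
        have hrec := mult_rec (fun m => s m p0) (fun m => s2 m p0) m0 z0 hm0z hpos
          (by simp [hs2def]) hs2zB (fun m hm1 hm2 => by simp [hs2def, hm1, hm2])
        calc s m0 p0 * (Nat.multinomial Finset.univ (fun m => s m p0)
              * ∏ p ∈ Finset.univ.erase p0, Nat.multinomial Finset.univ (fun m => s m p))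
            = (s m0 p0 * Nat.multinomial Finset.univ (fun m => s m p0))
              * ∏ p ∈ Finset.univ.erase p0, Nat.multinomial Finset.univ (fun m => s m p) := by
              ring
          _ = ((s z0 p0 + 1) * Nat.multinomial Finset.univ (fun m => s2 m p0))
              * ∏ p ∈ Finset.univ.erase p0, Nat.multinomial Finset.univ (fun m => s m p) := by
              rw [hrec]
          _ = _ := by ring
      have hfinal : s m0 p0 * (lumpCell part s).card
          = s m0 p0 * ∏ p, Nat.multinomial Finset.univ (fun m => s m p) := by
        rw [hmove, hs2zB, hih, ← hmult]
      exact Nat.eq_of_mul_eq_mul_left (Nat.pos_of_ne_zero hs0) hfinal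

end Aux5


/-- **Theorem (lumped generator entry, Theorem 5.5 of the paper).**
If `s'` is obtained from the macrostate `s` by moving one vertex of cell `V_q` from
vertex-state `A` to vertex-state `B` (`A ≠ B`), then the sum of the generator entries
between the lumping cells of `s` and `s'` equals
`(∏_p C(N_p; s_p)) ⬝ s_{A,q} ⬝ {ζ₀^{A,B} + (1/N_q) Σ_r ((Σ_{v∈V_q} d^v_r)/(N_r − δ_{q,r}))
  [Σ_m ζ_m^{A,B}(s_{m,r} − δ_{A,W_m} δ_{q,r})]}`,
where, in Lean's real division, the `r = q` summand when `N_q = 1` is `0/0 ⬝ (⋯) = 0`,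
matching the stated interpretation. -/
theorem lumped_generator_entry
    (V : Type) [Fintype V] [DecidableEq V]
    (G : SimpleGraph V) [DecidableRel G.Adj]
    (M P : ℕ) (hM : 1 ≤ M) (hP : 1 ≤ P)
    (part : V → Fin P) (hpart : ∀ p, ∃ v, part v = p)
    (ζ0 : Fin M → Fin M → ℝ) (ζ : Fin M → Fin M → Fin M → ℝ)
    (hζ0 : ∀ A B, 0 ≤ ζ0 A B) (hζ : ∀ A B m, 0 ≤ ζ A B m)
    (s s' : Fin M → Fin P → ℕ)
    (hs : ∀ p, ∑ m, s m p = Ncell part p)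
    (A B : Fin M) (q : Fin P) (hAB : A ≠ B)
    (hs' : ∀ m p, (s' m p : ℤ) =
      (s m p : ℤ) - (if m = A ∧ p = q then 1 else 0) + (if m = B ∧ p = q then 1 else 0)) :
    ∑ S ∈ lumpCell part s, ∑ S' ∈ lumpCell part s', Qmat G ζ0 ζ S S'
      = (∏ p, (Nat.multinomial Finset.univ (fun m => s m p) : ℝ)) * (s A q : ℝ) *
        (ζ0 A B + (1 / (Ncell part q : ℝ)) *
          ∑ r, ((∑ v ∈ cellVerts part q, (dOf G part v r : ℝ)) /
              ((Ncell part r : ℝ) - (if q = r then 1 else 0))) *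
            (∑ m, ζ A B m * ((s m r : ℝ) - (if A = m ∧ q = r then 1 else 0)))) := by
  classical
  have hNq : 0 < Ncell part q := by
    obtain ⟨v, hv⟩ := hpart q
    exact Finset.card_pos.mpr ⟨v, (mem_cellVerts part).mpr hv⟩
  -- Step A: inner sum reduces to a sum over flipping vertices
  have stepA : ∀ S ∈ lumpCell part s,
      ∑ S' ∈ lumpCell part s', Qmat G ζ0 ζ S S'
      = ∑ v ∈ (cellVerts part q).filter (fun v => S v = A), rate ζ0 ζ A B (nbr G S v) := by
    intro S hS
    have hfilt : ∑ S' ∈ (lumpCell part s').filter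
          (fun S' => (Finset.univ.filter (fun v => S v ≠ S' v)).card = 1),
          Qmat G ζ0 ζ S S'
        = ∑ S' ∈ lumpCell part s', Qmat G ζ0 ζ S S' := by
      refine Finset.sum_filter_of_ne fun S' _ hne => ?_
      by_contra hcard
      exact hne (by simp [Qmat, hcard])
    rw [← hfilt]
    have hset : (lumpCell part s').filter
          (fun S' => (Finset.univ.filter (fun v => S v ≠ S' v)).card = 1)
        = ((cellVerts part q).filter (fun v => S v = A)).image
            (fun v => Function.update S v B) := by
      ext S'
      simp only [Finset.mem_filter, Finset.mem_image]
      constructor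
      · rintro ⟨h1, h2⟩
        obtain ⟨v, hv1, hv2, hv3⟩ := diff_one_char part s s' A B q hAB hs' hS h1 h2
        exact ⟨v, ⟨(mem_cellVerts part).mpr hv1, hv2⟩, hv3.symm⟩
      · rintro ⟨v, hv, rfl⟩
        have hv1 := (mem_cellVerts part).mp hv.1
        refine ⟨flip_mem part s s' A B q hAB hs' hS hv1 hv.2, ?_⟩
        have : Finset.univ.filter (fun w => S w ≠ Function.update S v B w) = {v} := by
          ext w
          rcases eq_or_ne w v with rfl | hwv
          · simp [Function.update_self, hv.2, hAB]
          · simp [Function.update_of_ne hwv, hwv]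
        rw [this, Finset.card_singleton]
    have hinj : ∀ v1 ∈ (cellVerts part q).filter (fun v => S v = A),
        ∀ v2 ∈ (cellVerts part q).filter (fun v => S v = A),
        Function.update S v1 B = Function.update S v2 B → v1 = v2 := by
      intro v1 hv1 v2 hv2 heq
      by_contra hne
      rw [Finset.mem_filter] at hv1 hv2
      have h1 : Function.update S v1 B v1 = B := Function.update_self v1 B S
      have h2 : Function.update S v2 B v1 = S v1 := Function.update_of_ne hne B S
      rw [heq, h2, hv1.2] at h1
      exact hAB h1
    rw [hset, Finset.sum_image hinj]
    refine Finset.sum_congr rfl fun v hv => ?_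
    rw [Finset.mem_filter] at hv
    have hdiff : Finset.univ.filter (fun w => S w ≠ Function.update S v B w) = {v} := by
      ext w
      rcases eq_or_ne w v with rfl | hwv
      · simp [Function.update_self, hv.2, hAB]
      · simp [Function.update_of_ne hwv, hwv]
    show Qmat G ζ0 ζ S (Function.update S v B) = rate ζ0 ζ A B (nbr G S v)
    rw [Qmat, hdiff, Finset.card_singleton, if_pos rfl, Finset.sum_singleton,
      Function.update_self, hv.2]
  rw [Finset.sum_congr rfl stepA]
  -- expand the rate
  simp only [rate]
  rw [Finset.sum_congr rfl (fun S _ => Finset.sum_add_distrib), Finset.sum_add_distrib]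
  -- first term
  have hterm1 : ∑ S ∈ lumpCell part s,
      ∑ _v ∈ (cellVerts part q).filter (fun v => S v = A), ζ0 A B
      = ((lumpCell part s).card : ℝ) * (s A q : ℝ) * ζ0 A B := by
    rw [Finset.sum_congr rfl (fun S hS => by
      rw [Finset.sum_const, count_cell part hS A q, nsmul_eq_mul])]
    rw [Finset.sum_const, nsmul_eq_mul]
    ring
  -- second term: the neighbour counting
  have hterm2 : ∑ S ∈ lumpCell part s,
      ∑ v ∈ (cellVerts part q).filter (fun v => S v = A), ∑ m, ζ A B m * (nbr G S v m : ℝ)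
      = ∑ m, ζ A B m * ∑ r, (∑ v ∈ cellVerts part q, (dOf G part v r : ℝ)) *
          (((lumpCell part s).card : ℝ) * ((s A q : ℝ) *
              ((s m r : ℝ) - if q = r ∧ A = m then 1 else 0))
            / ((Ncell part q : ℝ) * ((Ncell part r : ℝ) - if q = r then 1 else 0))) := by
    -- push the m-sum outside
    rw [show ∑ S ∈ lumpCell part s, ∑ v ∈ (cellVerts part q).filter (fun v => S v = A),
          ∑ m, ζ A B m * (nbr G S v m : ℝ)
        = ∑ m, ζ A B m * ∑ S ∈ lumpCell part s,
            ∑ v ∈ (cellVerts part q).filter (fun v => S v = A), (nbr G S v m : ℝ) from by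
      rw [Finset.sum_congr rfl fun S (_ : S ∈ lumpCell part s) => Finset.sum_comm,
        Finset.sum_comm]
      refine Finset.sum_congr rfl fun m _ => ?_
      rw [Finset.mul_sum]
      refine Finset.sum_congr rfl fun S _ => ?_
      rw [Finset.mul_sum]]
    refine Finset.sum_congr rfl fun m _ => ?_
    congr 1
    -- ℕ-level identity
    have hnbr : ∀ (S : V → Fin M) (v : V), nbr G S v m
        = ∑ r, ((G.neighborFinset v).filter (fun u => part u = r ∧ S u = m)).card := by
      intro S v
      rw [nbr, Finset.card_eq_sum_card_fiberwise
        (f := part) (t := Finset.univ) (fun x _ => Finset.mem_univ _)]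
      refine Finset.sum_congr rfl fun r _ => ?_
      rw [Finset.filter_filter]
      exact congrArg Finset.card (Finset.filter_congr fun u _ => and_comm)
    have hswap : ∀ r : Fin P, ∑ S ∈ lumpCell part s,
          ∑ v ∈ (cellVerts part q).filter (fun v => S v = A),
            ((G.neighborFinset v).filter (fun u => part u = r ∧ S u = m)).card
        = ∑ v ∈ cellVerts part q, ∑ u ∈ (G.neighborFinset v).filter (fun u => part u = r),
            ((lumpCell part s).filter (fun S => S v = A ∧ S u = m)).card := by
      intro r
      have h1 : ∀ S : V → Fin M, ∑ v ∈ (cellVerts part q).filter (fun v => S v = A),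
            ((G.neighborFinset v).filter (fun u => part u = r ∧ S u = m)).card
          = ∑ v ∈ cellVerts part q, ∑ u ∈ (G.neighborFinset v).filter (fun u => part u = r),
              (if S v = A ∧ S u = m then 1 else 0) := by
        intro S
        rw [Finset.sum_filter]
        refine Finset.sum_congr rfl fun v _ => ?_
        by_cases hvA : S v = A
        · rw [if_pos hvA]
          rw [← Finset.filter_filter, Finset.card_filter]
          refine Finset.sum_congr rfl fun u _ => ?_
          simp [hvA]
        · rw [if_neg hvA]
          refine (Finset.sum_eq_zero fun u _ => ?_).symm
          simp [hvA]
      rw [Finset.sum_congr rfl fun S _ => h1 S, Finset.sum_comm]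
      refine Finset.sum_congr rfl fun v _ => ?_
      rw [Finset.sum_comm]
      refine Finset.sum_congr rfl fun u _ => ?_
      rw [Finset.card_filter]
    -- now cast and use the pair formula
    calc ∑ S ∈ lumpCell part s,
          ∑ v ∈ (cellVerts part q).filter (fun v => S v = A), (nbr G S v m : ℝ)
        = ∑ r, ∑ v ∈ cellVerts part q,
            ∑ u ∈ (G.neighborFinset v).filter (fun u => part u = r),
              (((lumpCell part s).filter (fun S => S v = A ∧ S u = m)).card : ℝ) := by
          rw [show ∑ S ∈ lumpCell part s,
                ∑ v ∈ (cellVerts part q).filter (fun v => S v = A), (nbr G S v m : ℝ)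
              = ((∑ S ∈ lumpCell part s,
                  ∑ v ∈ (cellVerts part q).filter (fun v => S v = A), nbr G S v m : ℕ) : ℝ) from by
            push_cast; rfl]
          rw [show ∑ S ∈ lumpCell part s,
                ∑ v ∈ (cellVerts part q).filter (fun v => S v = A), nbr G S v m
              = ∑ r, ∑ v ∈ cellVerts part q,
                  ∑ u ∈ (G.neighborFinset v).filter (fun u => part u = r),
                    ((lumpCell part s).filter (fun S => S v = A ∧ S u = m)).card from by
            rw [Finset.sum_congr rfl fun S _ => Finset.sum_congr rfl fun v _ => hnbr S v]
            rw [Finset.sum_congr rfl fun S (_ : S ∈ lumpCell part s) => Finset.sum_comm,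
              Finset.sum_comm]
            exact Finset.sum_congr rfl fun r _ => hswap r]
          push_cast
          rfl
      _ = ∑ r, (∑ v ∈ cellVerts part q, (dOf G part v r : ℝ)) *
            (((lumpCell part s).card : ℝ) * ((s A q : ℝ) *
                ((s m r : ℝ) - if q = r ∧ A = m then 1 else 0))
              / ((Ncell part q : ℝ) * ((Ncell part r : ℝ) - if q = r then 1 else 0))) := by
          refine Finset.sum_congr rfl fun r _ => ?_
          have hpair : ∀ v ∈ cellVerts part q,
              ∀ u ∈ (G.neighborFinset v).filter (fun u => part u = r),
              (((lumpCell part s).filter (fun S => S v = A ∧ S u = m)).card : ℝ)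
              = ((lumpCell part s).card : ℝ) * ((s A q : ℝ) *
                  ((s m r : ℝ) - if q = r ∧ A = m then 1 else 0))
                / ((Ncell part q : ℝ) * ((Ncell part r : ℝ) - if q = r then 1 else 0)) := by
            intro v hv u hu
            rw [Finset.mem_filter, SimpleGraph.mem_neighborFinset] at hu
            have hvu : v ≠ u := G.ne_of_adj hu.1
            have hu' : u ∈ cellVerts part r := (mem_cellVerts part).mpr hu.2
            have hform := pair_formula part s A m hv hu' hvu
            have hd1 : 0 < Ncell part q := Finset.card_pos.mpr ⟨v, hv⟩
            have hd2 : 0 < Ncell part r - (if q = r then 1 else 0) := by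
              by_cases hqr : q = r
              · have h2 : 1 < Ncell part r := by
                  refine Finset.one_lt_card.mpr ⟨v, ?_, u, hu', hvu⟩
                  rw [← hqr]; exact hv
                simp only [if_pos hqr]
                exact Nat.sub_pos_of_lt h2
              · simp only [if_neg hqr, Nat.sub_zero]
                exact Finset.card_pos.mpr ⟨u, hu'⟩
            -- cast auxiliary identities
            have hc1 : ((Ncell part r - if q = r then 1 else 0 : ℕ) : ℝ)
                = (Ncell part r : ℝ) - (if q = r then 1 else 0) := by
              by_cases hqr : q = r
              · have h2 : 1 < Ncell part r :=
                  Finset.one_lt_card.mpr ⟨v, by rw [← hqr]; exact hv, u, hu', hvu⟩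
                simp only [if_pos hqr]
                rw [Nat.cast_sub h2.le]
                norm_num
              · simp [hqr]
            have hc2 : ((s A q * (s m r - if q = r ∧ A = m then 1 else 0) : ℕ) : ℝ)
                = (s A q : ℝ) * ((s m r : ℝ) - if q = r ∧ A = m then 1 else 0) := by
              by_cases h : q = r ∧ A = m
              · have hAq : s A q = s m r := by rw [h.2, h.1]
                simp only [if_pos h]
                rcases Nat.eq_zero_or_pos (s m r) with h0 | h0
                · rw [hAq, h0]
                  simp
                · rw [Nat.cast_mul, Nat.cast_sub h0]
                  norm_num
              · simp only [if_neg h, Nat.sub_zero, sub_zero, Nat.cast_mul]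
            have hcast : (((lumpCell part s).filter
                  (fun S => S v = A ∧ S u = m)).card : ℝ)
                * ((Ncell part q : ℝ) * ((Ncell part r : ℝ) - if q = r then 1 else 0))
                = ((lumpCell part s).card : ℝ) * ((s A q : ℝ) *
                    ((s m r : ℝ) - if q = r ∧ A = m then 1 else 0)) := by
              rw [← hc1, ← hc2, ← Nat.cast_mul, ← Nat.cast_mul]
              exact_mod_cast hform
            have hden : ((Ncell part q : ℝ) * ((Ncell part r : ℝ) - if q = r then 1 else 0)) ≠ 0 := by
              rw [← hc1]
              have h1 : (0:ℝ) < (Ncell part q : ℝ) := by exact_mod_cast hd1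
              have h2 : (0:ℝ) < ((Ncell part r - if q = r then 1 else 0 : ℕ) : ℝ) := by
                exact_mod_cast hd2
              exact ne_of_gt (mul_pos h1 h2)
            rw [eq_div_iff hden]
            exact hcast
          rw [Finset.sum_congr rfl (fun v hv => Finset.sum_congr rfl (hpair v hv)),
            Finset.sum_mul]
          refine Finset.sum_congr rfl fun v _ => ?_
          rw [Finset.sum_const, nsmul_eq_mul]
          rfl
  have hKL : (∏ p, (Nat.multinomial Finset.univ (fun m => s m p) : ℝ))
      = ((lumpCell part s).card : ℝ) := by
    rw [card_lump part hM s hs, Nat.cast_prod]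
  have key : (∑ m, ζ A B m * ∑ r, (∑ v ∈ cellVerts part q, (dOf G part v r : ℝ)) *
        (((lumpCell part s).card : ℝ) * ((s A q : ℝ) *
            ((s m r : ℝ) - if q = r ∧ A = m then 1 else 0))
          / ((Ncell part q : ℝ) * ((Ncell part r : ℝ) - if q = r then 1 else 0))))
      = ((lumpCell part s).card : ℝ) * (s A q : ℝ) * ((1 / (Ncell part q : ℝ)) *
          ∑ r, ((∑ v ∈ cellVerts part q, (dOf G part v r : ℝ)) /
              ((Ncell part r : ℝ) - (if q = r then 1 else 0))) *
            (∑ m, ζ A B m * ((s m r : ℝ) - (if A = m ∧ q = r then 1 else 0)))) := by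
    have hqne : ((Ncell part q : ℝ)) ≠ 0 := by
      have : (0:ℝ) < (Ncell part q : ℝ) := by exact_mod_cast hNq
      exact ne_of_gt this
    calc (∑ m, ζ A B m * ∑ r, (∑ v ∈ cellVerts part q, (dOf G part v r : ℝ)) *
          (((lumpCell part s).card : ℝ) * ((s A q : ℝ) *
              ((s m r : ℝ) - if q = r ∧ A = m then 1 else 0))
            / ((Ncell part q : ℝ) * ((Ncell part r : ℝ) - if q = r then 1 else 0))))
        = ∑ r, ∑ m, ζ A B m * ((∑ v ∈ cellVerts part q, (dOf G part v r : ℝ)) *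
          (((lumpCell part s).card : ℝ) * ((s A q : ℝ) *
              ((s m r : ℝ) - if q = r ∧ A = m then 1 else 0))
            / ((Ncell part q : ℝ) * ((Ncell part r : ℝ) - if q = r then 1 else 0)))) := by
          rw [Finset.sum_congr rfl fun m (_ : m ∈ (Finset.univ : Finset (Fin M))) =>
            Finset.mul_sum _ _ _]
          exact Finset.sum_comm
      _ = ∑ r, ((lumpCell part s).card : ℝ) * (s A q : ℝ) * ((1 / (Ncell part q : ℝ)) *
            (((∑ v ∈ cellVerts part q, (dOf G part v r : ℝ)) /
                ((Ncell part r : ℝ) - (if q = r then 1 else 0))) *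
              (∑ m, ζ A B m * ((s m r : ℝ) - (if A = m ∧ q = r then 1 else 0))))) := by
          refine Finset.sum_congr rfl fun r _ => ?_
          have perterm : ∀ m : Fin M, ζ A B m * ((∑ v ∈ cellVerts part q, (dOf G part v r : ℝ)) *
              (((lumpCell part s).card : ℝ) * ((s A q : ℝ) *
                  ((s m r : ℝ) - if q = r ∧ A = m then 1 else 0))
                / ((Ncell part q : ℝ) * ((Ncell part r : ℝ) - if q = r then 1 else 0))))
              = ((lumpCell part s).card : ℝ) * (s A q : ℝ) * ((1 / (Ncell part q : ℝ)) *
                (((∑ v ∈ cellVerts part q, (dOf G part v r : ℝ)) /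
                    ((Ncell part r : ℝ) - (if q = r then 1 else 0))) *
                  (ζ A B m * ((s m r : ℝ) - (if A = m ∧ q = r then 1 else 0))))) := by
            intro m
            have hδ : (if A = m ∧ q = r then (1:ℝ) else 0)
                = (if q = r ∧ A = m then 1 else 0) := by
              by_cases h1 : A = m <;> by_cases h2 : q = r <;> simp [h1, h2]
            rw [hδ]
            rcases eq_or_ne ((Ncell part r : ℝ) - if q = r then 1 else 0) 0 with hc | hc
            · rw [hc]
              simp
            · field_simp
          rw [Finset.sum_congr rfl fun m _ => perterm m]
          rw [← Finset.mul_sum, ← Finset.mul_sum, ← Finset.mul_sum]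
      _ = _ := by rw [← Finset.mul_sum, ← Finset.mul_sum]
  rw [hterm1, hterm2, hKL, key]
  ring
end

section
/- Let s be a macrostate for the partition Π_V and let s' be the macrostate obtained from s by decreasing the count of vertex-state A in cell V_q by one and increasing the count of vertex-state B in cell V_q by one, where A ≠ B (so a transition from s to s' corresponds to a vertex in V_q changing from vertex-state A to vertex-state B). Then Σ_{S∈cell(s)} Σ_{S'∈cell(s')} Q_{S,S'} = Σ_{v∈V_q} Σ_{n} R_{A,B}( Σ_{p=1}^P n_{1,p}, …, Σ_{p=1}^P n_{M,p} ) · ∏_{p=1}^P A( s_p − δ_{p,q} e_A , n_p ), where the inner sum is over all neighbourhood counts n for v (matrices n ∈ ℤ_{≥0}^{M×P} with Σ_m n_{m,p} = d^v_p for every p), s_p denotes the p-th column of s, and δ is the Kronecker delta. -/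
open Finset

/-- Multinomial coefficient C(t; a) for integer arguments: t!/(∏ₘ aₘ!) when all aₘ ≥ 0
and Σₘ aₘ = t, and 0 otherwise. -/
def multinomZ {M : ℕ} (t : ℤ) (a : Fin M → ℤ) : ℕ :=
  if (∀ m, 0 ≤ a m) ∧ (∑ m, a m) = t then
    Nat.multinomial Finset.univ (fun m => (a m).toNat) else 0

/-- A(sp, np) = C(Σₘ npₘ; np) · C(Σₘ spₘ − Σₘ npₘ; sp − np). -/
def Afun {M : ℕ} (sp np : Fin M → ℤ) : ℕ :=
  multinomZ (∑ m, np m) np *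
    multinomZ ((∑ m, sp m) - ∑ m, np m) (fun m => sp m - np m)

set_option linter.unusedSectionVars false


def cntF (T : Type*) [Fintype T] [DecidableEq T] {M : ℕ} (a : Fin M → ℕ) : ℕ :=
  (Finset.univ.filter (fun g : T → Fin M =>
    ∀ m, (Finset.univ.filter (fun x => g x = m)).card = a m)).card

lemma card_filter_subtype {V : Type*} [Fintype V] [DecidableEq V] (r : V → Prop) [DecidablePred r]
    (pred : V → Prop) [DecidablePred pred] :
    (Finset.univ.filter (fun u : {x // r x} => pred u.1)).card
      = (Finset.univ.filter (fun u : V => r u ∧ pred u)).card := by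
  refine Finset.card_bij' (fun u _ => u.1)
    (fun u hu => (⟨u, ((Finset.mem_filter.mp hu).2).1⟩ : {x // r x})) ?_ ?_ ?_ ?_
  · intro u hu
    simp only [Finset.mem_filter, Finset.mem_univ, true_and] at hu ⊢
    exact ⟨u.2, hu⟩
  · intro u hu
    simp only [Finset.mem_filter, Finset.mem_univ, true_and] at hu ⊢
    exact hu.2
  · intro u hu; rfl
  · intro u hu; rfl

section Step
variable {T : Type} [Fintype T] [DecidableEq T] {M : ℕ}

lemma fiber_card (a : Fin (M+1) → ℕ) (U : Finset T) (hU : U.card = a 0) :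
    (((Finset.univ.filter (fun g : T → Fin (M+1) =>
        ∀ m, (Finset.univ.filter (fun x => g x = m)).card = a m))).filter
      (fun g => Finset.univ.filter (fun x => g x = 0) = U)).card
    = cntF {x : T // x ∉ U} (fun m => a m.succ) := by
  rw [cntF]
  refine (Finset.card_bij
    (fun (h : {x : T // x ∉ U} → Fin M) _ =>
      fun x : T => if hx : x ∈ U then 0 else (h ⟨x, hx⟩).succ) ?_ ?_ ?_).symm
  · -- maps into the fiber
    intro h hh
    simp only [Finset.mem_filter, Finset.mem_univ, true_and] at hh ⊢
    constructor
    · intro m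
      induction m using Fin.cases with
      | zero =>
          have h0 : (Finset.univ.filter (fun x : T =>
              (if hx : x ∈ U then (0 : Fin (M+1)) else (h ⟨x, hx⟩).succ) = 0)) = U := by
            ext x
            simp only [Finset.mem_filter, Finset.mem_univ, true_and]
            by_cases hx : x ∈ U <;> simp [hx, Fin.succ_ne_zero]
          rw [h0, hU]
      | succ m =>
          have h2 : ∀ x : T, ((if hx : x ∈ U then (0 : Fin (M+1)) else (h ⟨x, hx⟩).succ) = m.succ)
              ↔ (x ∉ U ∧ (if hx : x ∈ U then (0 : Fin (M+1)) else (h ⟨x, hx⟩).succ) = m.succ) := by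
            intro x
            by_cases hx : x ∈ U <;> simp [hx, (Fin.succ_ne_zero m).symm]
          rw [Finset.filter_congr (fun x _ => h2 x)]
          rw [← card_filter_subtype (fun x : T => x ∉ U)
            (fun x => (if hx : x ∈ U then (0 : Fin (M+1)) else (h ⟨x, hx⟩).succ) = m.succ)]
          have h3 : ∀ x : {x : T // x ∉ U},
              ((if hx : x.1 ∈ U then (0 : Fin (M+1)) else (h ⟨x.1, hx⟩).succ) = m.succ) ↔ h x = m := by
            intro x
            rw [dif_neg x.2]
            exact Fin.succ_inj
          rw [Finset.filter_congr (fun x _ => h3 x)]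
          exact hh m
    · ext x
      simp only [Finset.mem_filter, Finset.mem_univ, true_and]
      by_cases hx : x ∈ U <;> simp [hx, Fin.succ_ne_zero]
  · -- injective
    intro h1 h2 _ _ he
    funext x
    have := congrFun he x.1
    rw [dif_neg x.2, dif_neg x.2] at this
    exact Fin.succ_inj.mp this
  · -- surjective
    intro g hg
    simp only [Finset.mem_filter, Finset.mem_univ, true_and] at hg
    have pf : ∀ x : {x : T // x ∉ U}, g x.1 ≠ 0 := by
      intro x h0
      have hx1 : x.1 ∈ Finset.univ.filter (fun y => g y = 0) :=
        Finset.mem_filter.mpr ⟨Finset.mem_univ _, h0⟩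
      rw [hg.2] at hx1
      exact x.2 hx1
    have hk : ∀ x : {x : T // x ∉ U}, ((g x.1).pred (pf x)).succ = g x.1 :=
      fun x => Fin.succ_pred _ _
    refine ⟨fun x => (g x.1).pred (pf x), ?_, ?_⟩
    · simp only [Finset.mem_filter, Finset.mem_univ, true_and]
      intro m
      have h1 : ∀ x : {x : T // x ∉ U}, ((g x.1).pred (pf x) = m) ↔ g x.1 = m.succ := by
        intro x
        constructor
        · intro e; rw [← hk x, e]
        · intro e
          exact Fin.succ_inj.mp (by rw [hk x]; exact e)
      rw [Finset.filter_congr (fun x _ => h1 x)]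
      rw [card_filter_subtype (fun x : T => x ∉ U) (fun x => g x = m.succ)]
      have h2 : ∀ x : T, (x ∉ U ∧ g x = m.succ) ↔ g x = m.succ := by
        intro x
        constructor
        · exact And.right
        · intro e
          refine ⟨fun hx => ?_, e⟩
          rw [← hg.2] at hx
          simp only [Finset.mem_filter, Finset.mem_univ, true_and] at hx
          rw [hx] at e
          exact (Fin.succ_ne_zero m) e.symm
      rw [Finset.filter_congr (fun x _ => h2 x)]
      exact hg.1 m.succ
    · funext x
      dsimp only
      by_cases hx : x ∈ U
      · rw [dif_pos hx]
        have hx1 : x ∈ Finset.univ.filter (fun y => g y = 0) := by rw [hg.2]; exact hx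
        simp only [Finset.mem_filter, Finset.mem_univ, true_and] at hx1
        exact hx1.symm
      · rw [dif_neg hx, Fin.succ_pred]

end Step

lemma cntF_eq (M : ℕ) : ∀ (T : Type) [Fintype T] [DecidableEq T] (a : Fin M → ℕ),
    cntF T a = if (∑ m, a m) = Fintype.card T then Nat.multinomial Finset.univ a else 0 := by
  induction M with
  | zero =>
      intro T _ _ a
      classical
      rw [cntF]
      have h1 : (Finset.univ.filter (fun g : T → Fin 0 =>
          ∀ m, (Finset.univ.filter (fun x => g x = m)).card = a m)) = Finset.univ := by
        apply Finset.filter_true_of_mem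
        intro g _ m
        exact absurd m.2 (by omega)
      rw [h1, Finset.card_univ, Fintype.card_fun]
      simp only [Fintype.card_fin, Finset.univ_eq_empty, Finset.sum_empty,
        Nat.multinomial_empty, zero_pow_eq]
      by_cases h : Fintype.card T = 0 <;> simp [h, eq_comm]
  | succ M ih =>
      intro T _ _ a
      classical
      rw [cntF]
      have hmaps : ∀ g ∈ (Finset.univ.filter (fun g : T → Fin (M+1) =>
          ∀ m, (Finset.univ.filter (fun x => g x = m)).card = a m)),
          (Finset.univ.filter (fun x => g x = 0)) ∈
            Finset.powersetCard (a 0) (Finset.univ : Finset T) := by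
        intro g hg
        simp only [Finset.mem_filter, Finset.mem_univ, true_and] at hg
        exact Finset.mem_powersetCard.mpr ⟨Finset.subset_univ _, hg 0⟩
      rw [Finset.card_eq_sum_card_fiberwise hmaps]
      have hcardsub : ∀ U ∈ Finset.powersetCard (a 0) (Finset.univ : Finset T),
          Fintype.card {x : T // x ∉ U} = Fintype.card T - a 0 := by
        intro U hU
        rw [Fintype.card_subtype]
        have : Finset.univ.filter (fun x : T => x ∉ U) = Uᶜ := by ext x; simp
        rw [this, Finset.card_compl, (Finset.mem_powersetCard.mp hU).2]
      have hfib : ∀ U ∈ Finset.powersetCard (a 0) (Finset.univ : Finset T),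
          (((Finset.univ.filter (fun g : T → Fin (M+1) =>
              ∀ m, (Finset.univ.filter (fun x => g x = m)).card = a m))).filter
            (fun g => Finset.univ.filter (fun x => g x = 0) = U)).card
          = if (∑ m : Fin M, a m.succ) = Fintype.card T - a 0
              then Nat.multinomial Finset.univ (fun m : Fin M => a m.succ) else 0 := by
        intro U hU
        rw [fiber_card a U (Finset.mem_powersetCard.mp hU).2, ih, hcardsub U hU]
      rw [Finset.sum_congr rfl hfib, Finset.sum_const, Finset.card_powersetCard,
        Finset.card_univ, smul_eq_mul]
      -- now pure arithmetic
      rw [Fin.sum_univ_succ]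
      by_cases hle : a 0 ≤ Fintype.card T
      · by_cases hsum : a 0 + ∑ m : Fin M, a m.succ = Fintype.card T
        · rw [if_pos (by omega), if_pos hsum]
          have hre : Nat.multinomial Finset.univ a
              = (a 0 + ∑ m : Fin M, a m.succ).choose (a 0)
                * Nat.multinomial Finset.univ (fun m : Fin M => a m.succ) := by
            rw [Fin.univ_succ, Nat.multinomial_cons]
            congr 1
            · rw [Finset.sum_map]; rfl
            · rw [Nat.multinomial, Nat.multinomial, Finset.sum_map, Finset.prod_map]; rfl
          rw [hre, hsum]
        · rw [if_neg (by omega), if_neg hsum, mul_zero]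
      · rw [Nat.choose_eq_zero_of_lt (by omega), zero_mul, if_neg (by omega)]

lemma block_count {V : Type} [Fintype V] [DecidableEq V] {M : ℕ} {I : Type} [Fintype I]
    [DecidableEq I] (β : V → I) (c : I → Fin M → ℕ) :
    (Finset.univ.filter (fun S : V → Fin M =>
      ∀ i m, (Finset.univ.filter (fun u => β u = i ∧ S u = m)).card = c i m)).card
    = ∏ i, cntF {u : V // β u = i} (c i) := by
  have key : (Finset.univ.filter (fun S : V → Fin M =>
      ∀ i m, (Finset.univ.filter (fun u => β u = i ∧ S u = m)).card = c i m)).card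
      = (Fintype.piFinset (fun i : I =>
          Finset.univ.filter (fun g : {u : V // β u = i} → Fin M =>
            ∀ m, (Finset.univ.filter (fun x => g x = m)).card = c i m))).card := by
    refine Finset.card_bij'
      (fun S _ => fun i (u : {u : V // β u = i}) => S u.1)
      (fun f _ => fun u : V => f (β u) ⟨u, rfl⟩) ?_ ?_ ?_ ?_
    · intro S hS
      simp only [Finset.mem_filter, Finset.mem_univ, true_and] at hS
      rw [Fintype.mem_piFinset]
      intro i
      simp only [Finset.mem_filter, Finset.mem_univ, true_and]
      intro m
      rw [card_filter_subtype (fun u : V => β u = i) (fun u => S u = m)]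
      exact hS i m
    · intro f hf
      rw [Fintype.mem_piFinset] at hf
      simp only [Finset.mem_filter, Finset.mem_univ, true_and]
      intro i m
      rw [← card_filter_subtype (fun u : V => β u = i) (fun u => f (β u) ⟨u, rfl⟩ = m)]
      have h1 : ∀ u : {u : V // β u = i}, (f (β u.1) ⟨u.1, rfl⟩ = m) ↔ f i u = m := by
        rintro ⟨w, hw⟩
        subst hw
        exact Iff.rfl
      rw [Finset.filter_congr (fun u _ => h1 u)]
      have := hf i
      simp only [Finset.mem_filter, Finset.mem_univ, true_and] at this
      exact this m
    · intro S hS; rfl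
    · intro f hf
      funext i
      funext u
      obtain ⟨w, hw⟩ := u
      subst hw
      rfl
  rw [key, Fintype.card_piFinset]
  rfl

lemma card_split_vertex {V : Type} [Fintype V] [DecidableEq V] (pr : V → Prop) [DecidablePred pr]
    (v : V) :
    (Finset.univ.filter pr).card
      = (Finset.univ.filter (fun u => pr u ∧ u ≠ v)).card + (if pr v then 1 else 0) := by
  classical
  have h := Finset.card_filter_add_card_filter_not (s := Finset.univ.filter pr)
    (p := fun u => u = v)
  rw [Finset.filter_filter, Finset.filter_filter] at h
  have h2 : Finset.univ.filter (fun u => pr u ∧ u = v) = if pr v then {v} else ∅ := by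
    ext u
    by_cases hv : pr v
    · simp only [if_pos hv, Finset.mem_filter, Finset.mem_univ, true_and, Finset.mem_singleton]
      constructor
      · exact And.right
      · rintro rfl; exact ⟨hv, rfl⟩
    · simp only [if_neg hv, Finset.mem_filter, Finset.mem_univ, true_and,
        Finset.notMem_empty, iff_false, not_and]
      rintro h1 rfl; exact hv h1
  rw [h2] at h
  simp only [ne_eq]
  by_cases hv : pr v <;>
    simp only [hv, if_pos, if_neg, if_true, if_false, Finset.card_singleton,
      Finset.card_empty] at h ⊢ <;> omega

section Main
variable {V : Type} [Fintype V] [DecidableEq V] (G : SimpleGraph V) [DecidableRel G.Adj]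
  {M P : ℕ} (part : V → Fin P)

lemma mem_lumpCell_update {s s' : Fin M → Fin P → ℕ} {A B : Fin M} {q : Fin P} (hAB : A ≠ B)
    (hs' : ∀ m p, (s' m p : ℤ) =
      (s m p : ℤ) - (if m = A ∧ p = q then 1 else 0) + (if m = B ∧ p = q then 1 else 0))
    {S : V → Fin M} (hS : S ∈ lumpCell part s) {v : V} (hpv : part v = q) (hSv : S v = A) :
    Function.update S v B ∈ lumpCell part s' := by
  rw [lumpCell, Finset.mem_filter] at hS ⊢
  refine ⟨Finset.mem_univ _, fun m p => ?_⟩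
  have e1 := card_split_vertex (fun u => part u = p ∧ Function.update S v B u = m) v
  have e2 := card_split_vertex (fun u => part u = p ∧ S u = m) v
  have hfeq : Finset.univ.filter (fun u => (part u = p ∧ Function.update S v B u = m) ∧ u ≠ v)
      = Finset.univ.filter (fun u => (part u = p ∧ S u = m) ∧ u ≠ v) := by
    apply Finset.filter_congr
    intro u _
    constructor
    · rintro ⟨⟨h1, h2⟩, h3⟩; rw [Function.update_of_ne h3] at h2; exact ⟨⟨h1, h2⟩, h3⟩
    · rintro ⟨⟨h1, h2⟩, h3⟩; rw [← Function.update_of_ne h3 B S] at h2; exact ⟨⟨h1, h2⟩, h3⟩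
  rw [hfeq] at e1
  rw [hS.2 m p] at e2
  have h3 := hs' m p
  rw [Function.update_self] at e1
  by_cases hpq : p = q
  · subst hpq
    by_cases hmA : m = A
    · subst hmA
      by_cases hmB : m = B
      · exact absurd (hmB ▸ hAB) (fun hne => hne rfl)
      · rw [if_neg (fun h : _ ∧ _ => hmB h.2.symm)] at e1
        rw [if_pos ⟨hpv, hSv⟩] at e2
        rw [if_pos ⟨rfl, rfl⟩, if_neg (fun h : _ ∧ _ => hmB h.1)] at h3
        omega
    · by_cases hmB : m = B
      · subst hmB
        rw [if_pos ⟨hpv, rfl⟩] at e1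
        rw [if_neg (fun h : _ ∧ _ => hmA (hSv ▸ h.2 : (A : Fin M) = m).symm)] at e2
        rw [if_neg (fun h : _ ∧ _ => hmA h.1), if_pos ⟨rfl, rfl⟩] at h3
        omega
      · rw [if_neg (fun h : _ ∧ _ => hmB h.2.symm)] at e1
        rw [if_neg (fun h : _ ∧ _ => hmA (hSv ▸ h.2 : (A : Fin M) = m).symm)] at e2
        rw [if_neg (fun h : _ ∧ _ => hmA h.1), if_neg (fun h : _ ∧ _ => hmB h.1)] at h3
        omega
  · have hne : part v ≠ p := fun h => hpq (hpv ▸ h.symm ▸ rfl)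
    rw [if_neg (fun h : _ ∧ _ => hne h.1)] at e1
    rw [if_neg (fun h : _ ∧ _ => hne h.1)] at e2
    rw [if_neg (fun h : _ ∧ _ => hpq h.2), if_neg (fun h : _ ∧ _ => hpq h.2)] at h3
    omega


lemma qmat_update (ζ0 : Fin M → Fin M → ℝ) (ζ : Fin M → Fin M → Fin M → ℝ)
    {A B : Fin M} (hAB : A ≠ B) {S : V → Fin M} {v : V} (hSv : S v = A) :
    Qmat G ζ0 ζ S (Function.update S v B) = rate ζ0 ζ A B (nbr G S v) := by
  have hset : Finset.univ.filter (fun u => S u ≠ Function.update S v B u) = {v} := by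
    ext u
    simp only [Finset.mem_filter, Finset.mem_univ, true_and, Finset.mem_singleton]
    constructor
    · intro h
      by_contra hne
      exact h (Function.update_of_ne hne B S).symm
    · rintro rfl
      rw [Function.update_self, hSv]
      exact hAB
  rw [Qmat, hset]
  simp only [Finset.card_singleton, if_true, Finset.sum_singleton, Function.update_self, hSv]

lemma qmat_reverse {s s' : Fin M → Fin P → ℕ} {A B : Fin M} {q : Fin P} (hAB : A ≠ B)
    (hs' : ∀ m p, (s' m p : ℤ) =
      (s m p : ℤ) - (if m = A ∧ p = q then 1 else 0) + (if m = B ∧ p = q then 1 else 0))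
    {S S' : V → Fin M} (hS : S ∈ lumpCell part s) (hS' : S' ∈ lumpCell part s')
    (ζ0 : Fin M → Fin M → ℝ) (ζ : Fin M → Fin M → Fin M → ℝ)
    (hQ : Qmat G ζ0 ζ S S' ≠ 0) :
    ∃ v, part v = q ∧ S v = A ∧ S' = Function.update S v B := by
  rw [Qmat] at hQ
  by_cases hcard : (Finset.univ.filter (fun u => S u ≠ S' u)).card = 1
  swap
  · rw [if_neg hcard] at hQ; exact absurd rfl hQ
  obtain ⟨v, hv⟩ := Finset.card_eq_one.mp hcard
  have hvmem : v ∈ Finset.univ.filter (fun u => S u ≠ S' u) := hv ▸ Finset.mem_singleton_self v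
  simp only [Finset.mem_filter, Finset.mem_univ, true_and] at hvmem
  have hagree : ∀ u, u ≠ v → S u = S' u := by
    intro u hu
    by_contra hne
    have : u ∈ Finset.univ.filter (fun w => S w ≠ S' w) :=
      Finset.mem_filter.mpr ⟨Finset.mem_univ _, hne⟩
    rw [hv, Finset.mem_singleton] at this
    exact hu this
  rw [lumpCell, Finset.mem_filter] at hS hS'
  -- count relations
  have key : ∀ m p, ((if part v = p ∧ S' v = m then (1:ℤ) else 0)
      - (if part v = p ∧ S v = m then (1:ℤ) else 0))
      = (if m = B ∧ p = q then (1:ℤ) else 0) - (if m = A ∧ p = q then (1:ℤ) else 0) := by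
    intro m p
    have e2 := card_split_vertex (fun u => part u = p ∧ S u = m) v
    have e2' := card_split_vertex (fun u => part u = p ∧ S' u = m) v
    have hfeq : Finset.univ.filter (fun u => (part u = p ∧ S' u = m) ∧ u ≠ v)
        = Finset.univ.filter (fun u => (part u = p ∧ S u = m) ∧ u ≠ v) := by
      apply Finset.filter_congr
      intro u _
      constructor
      · rintro ⟨⟨h1, h2⟩, h3⟩; exact ⟨⟨h1, (hagree u h3) ▸ h2⟩, h3⟩
      · rintro ⟨⟨h1, h2⟩, h3⟩; exact ⟨⟨h1, (hagree u h3) ▸ h2⟩, h3⟩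
    rw [hfeq] at e2'
    rw [hS.2 m p] at e2
    rw [hS'.2 m p] at e2'
    have h3 := hs' m p
    split_ifs at * <;> omega
  -- derive the structure
  have hq1 := key (S v) (part v)
  rw [if_neg (fun h : _ ∧ _ => hvmem h.2.symm), if_pos ⟨rfl, rfl⟩] at hq1
  have hSvA : S v = A ∧ part v = q := by
    by_cases h1 : S v = B ∧ part v = q
    · exfalso
      by_cases h2 : S v = A ∧ part v = q
      · exact hAB (h2.1 ▸ h1.1 : (A : Fin M) = B)
      · rw [if_pos h1, if_neg h2] at hq1; omega
    · by_cases h2 : S v = A ∧ part v = q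
      · exact h2
      · rw [if_pos, if_neg h2] at hq1
        · omega
        · exfalso; rw [if_neg h1, if_neg h2] at hq1; omega
  obtain ⟨hSvA, hpvq⟩ := hSvA
  have hq2 := key (S' v) (part v)
  rw [if_pos ⟨rfl, rfl⟩, if_neg (fun h : _ ∧ _ => hvmem h.2)] at hq2
  have hS'vB : S' v = B := by
    by_cases h1 : S' v = B
    · exact h1
    · exfalso
      rw [if_neg (fun h : _ ∧ _ => h1 h.1)] at hq2
      by_cases h2 : S' v = A ∧ part v = q
      · exact hvmem (hSvA.trans h2.1.symm)
      · rw [if_neg h2] at hq2; omega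
  refine ⟨v, hpvq, hSvA, ?_⟩
  funext u
  by_cases hu : u = v
  · subst hu; rw [Function.update_self, hS'vB]
  · rw [Function.update_of_ne hu, ← hagree u hu]


lemma step1 (ζ0 : Fin M → Fin M → ℝ) (ζ : Fin M → Fin M → Fin M → ℝ)
    {s s' : Fin M → Fin P → ℕ} {A B : Fin M} {q : Fin P} (hAB : A ≠ B)
    (hs' : ∀ m p, (s' m p : ℤ) =
      (s m p : ℤ) - (if m = A ∧ p = q then 1 else 0) + (if m = B ∧ p = q then 1 else 0)) :
    ∑ S ∈ lumpCell part s, ∑ S' ∈ lumpCell part s', Qmat G ζ0 ζ S S'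
      = ∑ v ∈ cellVerts part q, ∑ S ∈ (lumpCell part s).filter (fun S => S v = A),
          rate ζ0 ζ A B (nbr G S v) := by
  have inner : ∀ S ∈ lumpCell part s,
      ∑ S' ∈ lumpCell part s', Qmat G ζ0 ζ S S'
        = ∑ v ∈ (cellVerts part q).filter (fun v => S v = A), rate ζ0 ζ A B (nbr G S v) := by
    intro S hS
    have hsub : ((cellVerts part q).filter (fun v => S v = A)).image
        (fun v => Function.update S v B) ⊆ lumpCell part s' := by
      intro S' hS'
      obtain ⟨v, hv, rfl⟩ := Finset.mem_image.mp hS'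
      simp only [Finset.mem_filter, cellVerts, Finset.mem_univ, true_and] at hv
      exact mem_lumpCell_update part hAB hs' hS hv.1 hv.2
    have hzero : ∀ S' ∈ lumpCell part s',
        S' ∉ ((cellVerts part q).filter (fun v => S v = A)).image
          (fun v => Function.update S v B) → Qmat G ζ0 ζ S S' = 0 := by
      intro S' hS' hnot
      by_contra hQ
      obtain ⟨v, hpv, hSv, rfl⟩ := qmat_reverse G part hAB hs' hS hS' ζ0 ζ hQ
      exact hnot (Finset.mem_image.mpr ⟨v, by
        simp only [Finset.mem_filter, cellVerts, Finset.mem_univ, true_and]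
        exact ⟨hpv, hSv⟩, rfl⟩)
    rw [← Finset.sum_subset hsub hzero]
    rw [Finset.sum_image ?hinj]
    case hinj =>
      intro v hv w hw he
      simp only [Finset.mem_coe, Finset.mem_filter, cellVerts, Finset.mem_univ, true_and] at hv hw
      by_contra hne
      have := congrFun he v
      beta_reduce at this
      rw [Function.update_self, Function.update_of_ne hne, hv.2] at this
      exact hAB this.symm
    apply Finset.sum_congr rfl
    intro v hv
    simp only [Finset.mem_filter, cellVerts, Finset.mem_univ, true_and] at hv
    exact qmat_update G ζ0 ζ hAB hv.2
  rw [Finset.sum_congr rfl inner]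
  have h1 : ∀ S ∈ lumpCell part s,
      ∑ v ∈ (cellVerts part q).filter (fun v => S v = A), rate ζ0 ζ A B (nbr G S v)
      = ∑ v ∈ cellVerts part q, if S v = A then rate ζ0 ζ A B (nbr G S v) else 0 := by
    intro S _
    rw [Finset.sum_filter]
  rw [Finset.sum_congr rfl h1, Finset.sum_comm]
  apply Finset.sum_congr rfl
  intro v _
  rw [Finset.sum_filter]


/-- neighbourhood count matrix of `S` around `v` -/
def keyfun (G : SimpleGraph V) [DecidableRel G.Adj] (part : V → Fin P) (v : V)
    (S : V → Fin M) : Fin P → Fin M → ℕ :=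
  fun p m => ((G.neighborFinset v).filter (fun u => part u = p ∧ S u = m)).card

lemma keyfun_sum (v : V) (S : V → Fin M) (p : Fin P) :
    ∑ m, keyfun G part v S p m = dOf G part v p := by
  rw [dOf]
  rw [Finset.card_eq_sum_card_fiberwise (f := S)
    (t := Finset.univ) (fun u _ => Finset.mem_univ _)]
  apply Finset.sum_congr rfl
  intro m _
  rw [keyfun, Finset.filter_filter]

lemma nbr_eq_keyfun_sum (v : V) (S : V → Fin M) (m : Fin M) :
    nbr G S v m = ∑ p, keyfun G part v S p m := by
  rw [nbr]
  rw [Finset.card_eq_sum_card_fiberwise (f := part)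
    (t := Finset.univ) (fun u _ => Finset.mem_univ _)]
  apply Finset.sum_congr rfl
  intro p _
  rw [keyfun, Finset.filter_filter]
  congr 1
  apply Finset.filter_congr
  intro u _
  exact and_comm

lemma step2 (ζ0 : Fin M → Fin M → ℝ) (ζ : Fin M → Fin M → Fin M → ℝ)
    {s : Fin M → Fin P → ℕ} (A B : Fin M) (v : V) :
    ∑ S ∈ (lumpCell part s).filter (fun S => S v = A), rate ζ0 ζ A B (nbr G S v)
      = ∑ n ∈ Fintype.piFinset (fun p : Fin P =>
          Finset.Nat.antidiagonalTuple M (dOf G part v p)),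
        rate ζ0 ζ A B (fun m => ∑ p, n p m) *
          (((lumpCell part s).filter (fun S => S v = A)).filter
            (fun S => keyfun G part v S = n)).card := by
  rw [← Finset.sum_fiberwise_of_maps_to (g := fun S => keyfun G part v S)
    (t := Fintype.piFinset (fun p : Fin P => Finset.Nat.antidiagonalTuple M (dOf G part v p)))
    (fun S _ => by
      rw [Fintype.mem_piFinset]
      intro p
      rw [Finset.Nat.mem_antidiagonalTuple]
      exact keyfun_sum G part v S p)]
  apply Finset.sum_congr rfl
  intro n _
  have : ∀ S ∈ ((lumpCell part s).filter (fun S => S v = A)).filter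
      (fun S => keyfun G part v S = n),
      rate ζ0 ζ A B (nbr G S v) = rate ζ0 ζ A B (fun m => ∑ p, n p m) := by
    intro S hS
    have hk : keyfun G part v S = n := (Finset.mem_filter.mp hS).2
    congr 1
    funext m
    rw [nbr_eq_keyfun_sum G part v S m, hk]
  rw [Finset.sum_congr rfl this, Finset.sum_const, nsmul_eq_mul, mul_comm]


/-- block index map: `none` = the vertex `v` itself; `some (p, b)`: in cell `p`,
`b` = whether a neighbour of `v`. -/
def bmap (G : SimpleGraph V) [DecidableRel G.Adj] (part : V → Fin P) (v : V) :
    V → Option (Fin P × Bool) :=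
  fun u => if u = v then none else some (part u, decide (G.Adj v u))

lemma bmap_eq_none_iff (v u : V) : bmap G part v u = none ↔ u = v := by
  rw [bmap]
  split_ifs with h <;> simp [h]

lemma bmap_eq_some_iff (v u : V) (p : Fin P) (b : Bool) :
    bmap G part v u = some (p, b) ↔ u ≠ v ∧ part u = p ∧ decide (G.Adj v u) = b := by
  rw [bmap]
  split_ifs with h <;> simp [h]

lemma filter_bmap_none (v : V) (pr : V → Prop) [DecidablePred pr] :
    Finset.univ.filter (fun u => bmap G part v u = none ∧ pr u)
      = if pr v then {v} else ∅ := by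
  ext u
  simp only [Finset.mem_filter, Finset.mem_univ, true_and, bmap_eq_none_iff]
  by_cases hv : pr v
  · simp only [if_pos hv, Finset.mem_singleton]
    constructor
    · exact And.left
    · rintro rfl; exact ⟨rfl, hv⟩
  · simp only [if_neg hv, Finset.notMem_empty, iff_false, not_and]
    rintro rfl; exact hv

lemma filter_bmap_true (v : V) (p : Fin P) (pr : V → Prop) [DecidablePred pr] :
    Finset.univ.filter (fun u => bmap G part v u = some (p, true) ∧ pr u)
      = (G.neighborFinset v).filter (fun u => part u = p ∧ pr u) := by
  ext u
  simp only [Finset.mem_filter, Finset.mem_univ, true_and, bmap_eq_some_iff,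
    SimpleGraph.mem_neighborFinset, decide_eq_true_eq]
  constructor
  · rintro ⟨⟨h1, h2, h3⟩, h4⟩; exact ⟨h3, h2, h4⟩
  · rintro ⟨h1, h2, h3⟩; exact ⟨⟨fun he => G.ne_of_adj h1 he.symm, h2, h1⟩, h3⟩

lemma split_count (v : V) (p : Fin P) (pr : V → Prop) [DecidablePred pr] :
    (Finset.univ.filter (fun u => part u = p ∧ pr u)).card
      = ((G.neighborFinset v).filter (fun u => part u = p ∧ pr u)).card
        + (Finset.univ.filter (fun u => bmap G part v u = some (p, false) ∧ pr u)).card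
        + (if part v = p ∧ pr v then 1 else 0) := by
  have h1 := card_split_vertex (fun u => part u = p ∧ pr u) v
  have h2 := Finset.card_filter_add_card_filter_not
    (s := Finset.univ.filter (fun u => (part u = p ∧ pr u) ∧ u ≠ v))
    (p := fun u => G.Adj v u)
  rw [Finset.filter_filter, Finset.filter_filter] at h2
  have h3 : Finset.univ.filter (fun u => ((part u = p ∧ pr u) ∧ u ≠ v) ∧ G.Adj v u)
      = (G.neighborFinset v).filter (fun u => part u = p ∧ pr u) := by
    ext u
    simp only [Finset.mem_filter, Finset.mem_univ, true_and, SimpleGraph.mem_neighborFinset]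
    constructor
    · rintro ⟨⟨h1, _⟩, h2⟩; exact ⟨h2, h1⟩
    · rintro ⟨h1, h2⟩; exact ⟨⟨h2, fun he => G.ne_of_adj h1 he.symm⟩, h1⟩
  have h4 : Finset.univ.filter (fun u => ((part u = p ∧ pr u) ∧ u ≠ v) ∧ ¬G.Adj v u)
      = Finset.univ.filter (fun u => bmap G part v u = some (p, false) ∧ pr u) := by
    ext u
    simp only [Finset.mem_filter, Finset.mem_univ, true_and, bmap_eq_some_iff,
      decide_eq_false_iff_not]
    constructor
    · rintro ⟨⟨⟨ha, hb⟩, hc⟩, hd⟩; exact ⟨⟨hc, ha, hd⟩, hb⟩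
    · rintro ⟨⟨ha, hb, hc⟩, hd⟩; exact ⟨⟨⟨hb, hd⟩, ha⟩, hc⟩
  rw [h3, h4] at h2
  omega

end Main

lemma multinomial_indicator {M : ℕ} (A : Fin M) :
    Nat.multinomial Finset.univ (fun m => if m = A then 1 else 0) = 1 := by
  rw [Nat.multinomial]
  have h1 : ∑ m : Fin M, (if m = A then 1 else 0) = 1 := by simp
  have h2 : ∏ m : Fin M, (Nat.factorial (if m = A then 1 else 0)) = 1 := by
    apply Finset.prod_eq_one; intro m _; split_ifs <;> rfl
  rw [h1, h2]
  rfl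

lemma multinomZ_cast {M : ℕ} (a : Fin M → ℕ) :
    multinomZ (∑ m, (a m : ℤ)) (fun m => (a m : ℤ)) = Nat.multinomial Finset.univ a := by
  rw [multinomZ, if_pos ⟨fun m => Int.natCast_nonneg _, rfl⟩]
  simp only [Int.toNat_natCast]

/-- the per-block target counts -/
def cBlock {M P : ℕ} (s : Fin M → Fin P → ℕ) (n : Fin P → Fin M → ℕ) (A : Fin M) (q : Fin P) :
    Option (Fin P × Bool) → Fin M → ℕ
  | none => fun m => if m = A then 1 else 0
  | some (p, true) => fun m => n p m
  | some (p, false) => fun m => s m p - n p m - (if p = q ∧ m = A then 1 else 0)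

lemma multinomZ_sub {M P : ℕ} (s : Fin M → Fin P → ℕ) (n : Fin P → Fin M → ℕ)
    (A : Fin M) (q : Fin P) (p : Fin P)
    (hbig : ∀ m, n p m + (if p = q ∧ m = A then 1 else 0) ≤ s m p) :
    multinomZ ((∑ m, ((s m p : ℤ) - (if p = q ∧ m = A then 1 else 0))) - ∑ m, (n p m : ℤ))
        (fun m => ((s m p : ℤ) - (if p = q ∧ m = A then 1 else 0)) - (n p m : ℤ))
      = Nat.multinomial Finset.univ (cBlock s n A q (some (p, false))) := by
  have hcond : (∀ m, (0:ℤ) ≤ ((s m p : ℤ) - (if p = q ∧ m = A then 1 else 0)) - (n p m : ℤ))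
      ∧ (∑ m, (((s m p : ℤ) - (if p = q ∧ m = A then 1 else 0)) - (n p m : ℤ)))
        = (∑ m, ((s m p : ℤ) - (if p = q ∧ m = A then 1 else 0))) - ∑ m, (n p m : ℤ) := by
    constructor
    · intro m
      have := hbig m
      split_ifs at this ⊢ <;> omega
    · rw [← Finset.sum_sub_distrib]
  rw [multinomZ, if_pos hcond]
  apply Nat.multinomial_congr
  intro m _
  have := hbig m
  simp only [cBlock]
  split_ifs at this ⊢ <;> omega

section Main2
variable {V : Type} [Fintype V] [DecidableEq V] (G : SimpleGraph V) [DecidableRel G.Adj]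
  {M P : ℕ} (part : V → Fin P)

lemma sum_delta {M : ℕ} (A : Fin M) (p q : Fin P) :
    ∑ m : Fin M, (if p = q ∧ m = A then 1 else 0) = (if p = q then 1 else 0) := by
  by_cases hp : p = q
  · simp [hp]
  · simp [hp]

lemma step4 {s : Fin M → Fin P → ℕ} {A : Fin M} {q : Fin P}
    (hs : ∀ p, ∑ m, s m p = Ncell part p)
    {v : V} (hpv : part v = q)
    (n : Fin P → Fin M → ℕ) (hn : ∀ p, ∑ m, n p m = dOf G part v p) :
    (((lumpCell part s).filter (fun S => S v = A)).filter
        (fun S => keyfun G part v S = n)).card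
      = ∏ p, Afun (fun m => (s m p : ℤ) - (if p = q ∧ m = A then 1 else 0))
          (fun m => (n p m : ℤ)) := by
  have hiff : ∀ (S : V → Fin M), S v = A → ∀ p m, (part v = p ∧ S v = m) ↔ (p = q ∧ m = A) := by
    intro S hv p m
    constructor
    · rintro ⟨h1, h2⟩; exact ⟨h1 ▸ hpv, h2.symm.trans hv⟩
    · rintro ⟨rfl, rfl⟩; exact ⟨hpv, hv⟩
  by_cases hbig : ∀ p m, n p m + (if p = q ∧ m = A then 1 else 0) ≤ s m p
  · have hset : ((lumpCell part s).filter (fun S => S v = A)).filter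
        (fun S => keyfun G part v S = n)
        = Finset.univ.filter (fun S : V → Fin M => ∀ i m,
            (Finset.univ.filter (fun u => bmap G part v u = i ∧ S u = m)).card
              = cBlock s n A q i m) := by
      ext S
      simp only [Finset.mem_filter, Finset.mem_univ, true_and, lumpCell]
      constructor
      · rintro ⟨⟨hl, hv⟩, hk⟩
        have hk' : ∀ p m,
            ((G.neighborFinset v).filter (fun u => part u = p ∧ S u = m)).card = n p m :=
          fun p m => congrFun (congrFun hk p) m
        intro i m
        match i with
        | none =>
            rw [filter_bmap_none]
            simp only [cBlock]
            by_cases hm : m = A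
            · rw [if_pos (hv.trans hm.symm), if_pos hm, Finset.card_singleton]
            · rw [if_neg (fun h : S v = m => hm (h.symm.trans hv)), if_neg hm,
                Finset.card_empty]
        | some (p, true) =>
            rw [filter_bmap_true]
            simp only [cBlock]
            exact hk' p m
        | some (p, false) =>
            have h := split_count G part v p (fun u => S u = m)
            rw [hl m p, hk' p m, if_congr (hiff S hv p m) rfl rfl] at h
            have hb := hbig p m
            simp only [cBlock]
            split_ifs at h hb ⊢ <;> omega
      · intro hb
        have hv : S v = A := by
          have h0 := hb none (S v)
          rw [filter_bmap_none, if_pos rfl, Finset.card_singleton] at h0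
          simp only [cBlock] at h0
          by_contra hne
          rw [if_neg hne] at h0
          exact one_ne_zero h0
        have hk' : ∀ p m,
            ((G.neighborFinset v).filter (fun u => part u = p ∧ S u = m)).card = n p m := by
          intro p m
          have h1 := hb (some (p, true)) m
          rw [filter_bmap_true] at h1
          simpa only [cBlock] using h1
        refine ⟨⟨?_, hv⟩, ?_⟩
        · intro m p
          have h := split_count G part v p (fun u => S u = m)
          have hfalse := hb (some (p, false)) m
          simp only [cBlock] at hfalse
          rw [hk' p m, hfalse, if_congr (hiff S hv p m) rfl rfl] at h
          have hbg := hbig p m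
          split_ifs at h hbg ⊢ <;> omega
        · funext p m
          exact hk' p m
    rw [hset, block_count (bmap G part v) (cBlock s n A q)]
    have hfac : ∀ i : Option (Fin P × Bool),
        cntF {u : V // bmap G part v u = i} (cBlock s n A q i)
          = if (∑ m, cBlock s n A q i m)
                = (Finset.univ.filter (fun u => bmap G part v u = i)).card
              then Nat.multinomial Finset.univ (cBlock s n A q i) else 0 := by
      intro i
      rw [cntF_eq M _ (cBlock s n A q i), Fintype.card_subtype]
    rw [Finset.prod_congr rfl (fun i _ => hfac i)]
    rw [Fintype.prod_option]
    have hnone : (Finset.univ.filter (fun u => bmap G part v u = none)) = {v} := by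
      ext u
      simp [bmap_eq_none_iff]
    have hnonefac : (if (∑ m, cBlock s n A q none m)
          = (Finset.univ.filter (fun u => bmap G part v u = none)).card
        then Nat.multinomial Finset.univ (cBlock s n A q none) else 0) = 1 := by
      rw [hnone, Finset.card_singleton]
      have h1 : ∑ m, cBlock s n A q none m = 1 := by
        simp only [cBlock]
        simp
      rw [if_pos h1]
      exact multinomial_indicator A
    rw [hnonefac, one_mul, Fintype.prod_prod_type]
    apply Finset.prod_congr rfl
    intro p _
    rw [Fintype.prod_bool]
    have htrue : (Finset.univ.filter (fun u => bmap G part v u = some (p, true))).card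
        = dOf G part v p := by
      have h1 : Finset.univ.filter (fun u => bmap G part v u = some (p, true) ∧ True)
          = (G.neighborFinset v).filter (fun u => part u = p ∧ True) :=
        filter_bmap_true G part v p (fun _ => True)
      simp only [and_true] at h1
      rw [h1, dOf]
    have hfalsecard : (Finset.univ.filter (fun u => bmap G part v u = some (p, false))).card
        + dOf G part v p + (if p = q then 1 else 0) = Ncell part p := by
      have h := split_count G part v p (fun _ => True)
      simp only [and_true] at h
      have hc : (Finset.univ.filter (fun u => part u = p)).card = Ncell part p := rfl
      have hd : ((G.neighborFinset v).filter (fun u => part u = p)).card = dOf G part v p := rfl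
      have hite : (if part v = p then 1 else 0) = (if p = q then (1:ℕ) else 0) := by
        by_cases hp : p = q
        · rw [if_pos hp, if_pos (by rw [hpv, hp])]
        · rw [if_neg hp, if_neg (fun h : part v = p => hp (h ▸ hpv))]
      rw [hc, hd, hite] at h
      omega
    have hsumfalse : ∑ m, cBlock s n A q (some (p, false)) m
        = (Finset.univ.filter (fun u => bmap G part v u = some (p, false))).card := by
      have h1 : ∀ m, cBlock s n A q (some (p, false)) m + n p m
          + (if p = q ∧ m = A then 1 else 0) = s m p := by
        intro m
        have := hbig p m
        simp only [cBlock]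
        split_ifs at this ⊢ <;> omega
      have h2 : ∑ m, (cBlock s n A q (some (p, false)) m + n p m
          + (if p = q ∧ m = A then 1 else 0)) = ∑ m, s m p :=
        Finset.sum_congr rfl (fun m _ => h1 m)
      rw [Finset.sum_add_distrib, Finset.sum_add_distrib, sum_delta, hn p, hs p] at h2
      omega
    rw [if_pos, if_pos]
    · simp only [Afun, cBlock]
      congr 1
      · exact (multinomZ_cast (n p)).symm
      · exact (multinomZ_sub s n A q p (hbig p)).symm
    · exact hsumfalse
    · rw [htrue]
      simp only [cBlock]
      exact hn p
  · -- degenerate case: some entry would be negative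
    push_neg at hbig
    obtain ⟨p0, m0, hlt⟩ := hbig
    have hzero : (((lumpCell part s).filter (fun S => S v = A)).filter
        (fun S => keyfun G part v S = n)).card = 0 := by
      rw [Finset.card_eq_zero, Finset.eq_empty_iff_forall_notMem]
      intro S hS
      simp only [Finset.mem_filter, Finset.mem_univ, true_and, lumpCell] at hS
      obtain ⟨⟨hl, hv⟩, hk⟩ := hS
      have hk' : ((G.neighborFinset v).filter (fun u => part u = p0 ∧ S u = m0)).card = n p0 m0 :=
        congrFun (congrFun hk p0) m0
      have h := split_count G part v p0 (fun u => S u = m0)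
      rw [hl m0 p0, hk', if_congr (hiff S hv p0 m0) rfl rfl] at h
      split_ifs at h hlt <;> omega
    rw [hzero]
    symm
    apply Finset.prod_eq_zero (Finset.mem_univ p0)
    rw [Afun]
    apply mul_eq_zero_of_right
    simp only [multinomZ]
    split_ifs with hcnd
    · exfalso
      obtain ⟨hpos, -⟩ := hcnd
      have hnum := hpos m0
      clear hpos hzero hiff hs hn
      split_ifs at hnum hlt <;> omega
    · rfl

end Main2
/-- **Lemma 5.4 of the paper.** If a transition from the macrostate `s` to the macrostate
`s'` corresponds to a vertex of cell `V_q` changing from vertex-state `A` to `B` (`A ≠ B`),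
then `Σ_{S∈cell(s)} Σ_{S'∈cell(s')} Q_{S,S'}
  = Σ_{v∈V_q} Σ_{n | d^v} R_{A,B}(n 𝟙_P) ∏_p A(s_p − δ_{p,q} e_A, n_p)`,
where `n` ranges over neighbourhood counts of `v`: matrices with `Σ_m n_{m,p} = d^v_p`. -/

theorem lumped_rate_as_neighbourhood_sum
    (V : Type) [Fintype V] [DecidableEq V]
    (G : SimpleGraph V) [DecidableRel G.Adj]
    (M P : ℕ) (hM : 1 ≤ M) (hP : 1 ≤ P)
    (part : V → Fin P) (hpart : ∀ p, ∃ v, part v = p)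
    (ζ0 : Fin M → Fin M → ℝ) (ζ : Fin M → Fin M → Fin M → ℝ)
    (hζ0 : ∀ A B, 0 ≤ ζ0 A B) (hζ : ∀ A B m, 0 ≤ ζ A B m)
    (s s' : Fin M → Fin P → ℕ)
    (hs : ∀ p, ∑ m, s m p = Ncell part p)
    (A B : Fin M) (q : Fin P) (hAB : A ≠ B)
    (hs' : ∀ m p, (s' m p : ℤ) =
      (s m p : ℤ) - (if m = A ∧ p = q then 1 else 0) + (if m = B ∧ p = q then 1 else 0)) :
    ∑ S ∈ lumpCell part s, ∑ S' ∈ lumpCell part s', Qmat G ζ0 ζ S S'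
      = ∑ v ∈ cellVerts part q,
          ∑ n ∈ Fintype.piFinset (fun p : Fin P =>
              Finset.Nat.antidiagonalTuple M (dOf G part v p)),
            rate ζ0 ζ A B (fun m => ∑ p, n p m) *
              (∏ p, (Afun
                (fun m => (s m p : ℤ) - (if p = q ∧ m = A then 1 else 0))
                (fun m => (n p m : ℤ)) : ℝ)) := by
  rw [step1 G part ζ0 ζ hAB hs']
  apply Finset.sum_congr rfl
  intro v hv
  have hpv : part v = q := by
    simp only [cellVerts, Finset.mem_filter, Finset.mem_univ, true_and] at hv
    exact hv
  rw [step2 G part ζ0 ζ A B v]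
  apply Finset.sum_congr rfl
  intro n hn
  have hn' : ∀ p, ∑ m, n p m = dOf G part v p := by
    rw [Fintype.mem_piFinset] at hn
    intro p
    exact Finset.Nat.mem_antidiagonalTuple.mp (hn p)
  rw [step4 G part hs hpv n hn', Nat.cast_prod]
end

section
/- Let s be a macrostate for the partition Π_V, let v ∈ V, and let n be a neighbourhood count for v (a matrix n ∈ ℤ_{≥0}^{M×P} with Σ_m n_{m,p} = d^v_p for every p). Then n is realisable in the lumping cell of s — i.e., there exists a microstate S in the lumping cell of s such that for every m and p the number of neighbours of v in V_p with S-state W_m equals n_{m,p} — if and only if n_{m,p} ≤ s_{m,p} for all m and p. -/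
open Finset

lemma fill {V : Type} [Fintype V] [DecidableEq V] :
    ∀ (M : ℕ) (A : Finset V) (c : Fin (M + 1) → ℕ), ∑ m, c m = A.card →
      ∃ f : V → Fin (M + 1), ∀ m, (A.filter (fun u => f u = m)).card = c m := by
  intro M
  induction M with
  | zero =>
    intro A c hc
    refine ⟨fun _ => 0, fun m => ?_⟩
    have hm : m = 0 := Fin.fin_one_eq_zero m
    subst hm
    rw [Finset.filter_true_of_mem (fun _ _ => rfl), ← hc, Fin.sum_univ_one]
  | succ M ih =>
    intro A c hc
    have hle : c (Fin.last (M + 1)) ≤ A.card := by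
      rw [← hc]
      exact Finset.single_le_sum (fun _ _ => Nat.zero_le _) (mem_univ _)
    obtain ⟨B, hBA, hBcard⟩ := Finset.exists_subset_card_eq hle
    have hAB : (A \ B).card = ∑ m : Fin (M + 1), c m.castSucc := by
      rw [card_sdiff_of_subset hBA, hBcard]
      have := Fin.sum_univ_castSucc c
      omega
    obtain ⟨f', hf'⟩ := ih (A \ B) (fun m => c m.castSucc) hAB.symm
    refine ⟨fun u => if u ∈ B then Fin.last (M + 1) else (f' u).castSucc, fun m => ?_⟩
    rcases Fin.eq_castSucc_or_eq_last m with ⟨m', rfl⟩ | rfl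
    · have : A.filter (fun u => (if u ∈ B then Fin.last (M + 1) else (f' u).castSucc) = m'.castSucc)
          = (A \ B).filter (fun u => f' u = m') := by
        ext u
        simp only [mem_filter, mem_sdiff]
        constructor
        · rintro ⟨hu, h⟩
          by_cases hb : u ∈ B
          · simp [hb] at h
            exact absurd h.symm (Fin.castSucc_lt_last m').ne
          · simp [hb] at h
            exact ⟨⟨hu, hb⟩, h⟩
        · rintro ⟨⟨hu, hb⟩, h⟩
          refine ⟨hu, by simp [hb, h]⟩
      rw [this, hf']
    · have : A.filter (fun u => (if u ∈ B then Fin.last (M + 1) else (f' u).castSucc) = Fin.last (M + 1)) = B := by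
        ext u
        simp only [mem_filter]
        constructor
        · rintro ⟨hu, h⟩
          by_contra hb
          simp [hb] at h
        · intro hb
          exact ⟨hBA hb, by simp [hb]⟩
      rw [this, hBcard]

/-- **Lemma 5.2 of the paper.** A neighbourhood count `n` for a vertex `v`
(with column sums `Σ_m n_{m,p} = d^v_p`) is realisable in the lumping cell of the
macrostate `s` — there exists a microstate `S` in the cell of `s` in which, for every `m`
and `p`, the number of neighbours of `v` in `V_p` with state `W_m` is `n_{m,p}` — if and
only if `n_{m,p} ≤ s_{m,p}` for all `m, p`. -/
theorem realisable_iff_le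
    (V : Type) [Fintype V] [DecidableEq V]
    (G : SimpleGraph V) [DecidableRel G.Adj]
    (M P : ℕ) (hM : 1 ≤ M) (hP : 1 ≤ P)
    (part : V → Fin P) (hpart : ∀ p, ∃ v, part v = p)
    (s : Fin M → Fin P → ℕ)
    (hs : ∀ p, ∑ m, s m p = Ncell part p)
    (v : V) (n : Fin M → Fin P → ℕ)
    (hn : ∀ p, ∑ m, n m p = dOf G part v p) :
    (∃ S ∈ lumpCell part s, ∀ m p,
        ((G.neighborFinset v).filter (fun u => part u = p ∧ S u = m)).card = n m p)
      ↔ ∀ m p, n m p ≤ s m p := by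
  constructor
  · rintro ⟨S, hS, hreal⟩ m p
    simp only [lumpCell, mem_filter, mem_univ, true_and] at hS
    rw [← hreal m p, ← hS m p]
    apply Finset.card_le_card
    intro u hu
    simp only [mem_filter] at hu ⊢
    exact ⟨mem_univ u, hu.2⟩
  · intro hle
    obtain ⟨M', rfl⟩ : ∃ M', M = M' + 1 := ⟨M - 1, (Nat.succ_pred_eq_of_pos hM).symm⟩
    -- neighbour class cards
    have hAcard : ∀ p, (Finset.univ.filter (fun u => part u = p ∧ G.Adj v u)).card
        = ∑ m, n m p := by
      intro p
      rw [hn p]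
      unfold dOf
      congr 1
      ext u
      simp [SimpleGraph.mem_neighborFinset, and_comm]
    have hBcard : ∀ p, (Finset.univ.filter (fun u => part u = p ∧ ¬ G.Adj v u)).card
        = ∑ m, (s m p - n m p) := by
      intro p
      have hsplit := Finset.card_filter_add_card_filter_not
        (s := Finset.univ.filter (fun u => part u = p)) (p := fun u => G.Adj v u)
      rw [Finset.filter_filter, Finset.filter_filter] at hsplit
      have h1 : (Finset.univ.filter (fun u => part u = p ∧ G.Adj v u)).card = ∑ m, n m p :=
        hAcard p
      have h2 : (Finset.univ.filter (fun u => part u = p)).card = ∑ m, s m p := (hs p).symm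
      have h3 : ∑ m, (s m p - n m p) = ∑ m, s m p - ∑ m, n m p :=
        Finset.sum_tsub_distrib Finset.univ (fun m _ => hle m p)
      have h4 : ∑ m, n m p ≤ ∑ m, s m p := Finset.sum_le_sum (fun m _ => hle m p)
      omega
    have hA : ∀ p, ∃ f : V → Fin (M' + 1), ∀ m,
        ((Finset.univ.filter (fun u => part u = p ∧ G.Adj v u)).filter
          (fun u => f u = m)).card = n m p := by
      intro p
      exact fill M' _ (fun m => n m p) (hAcard p).symm
    have hB : ∀ p, ∃ f : V → Fin (M' + 1), ∀ m,
        ((Finset.univ.filter (fun u => part u = p ∧ ¬ G.Adj v u)).filter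
          (fun u => f u = m)).card = s m p - n m p := by
      intro p
      exact fill M' _ (fun m => s m p - n m p) (hBcard p).symm
    choose f hf using hA
    choose g hg using hB
    set S : V → Fin (M' + 1) := fun u => if G.Adj v u then f (part u) u else g (part u) u with hSdef
    have key1 : ∀ m p, (Finset.univ.filter (fun u => part u = p ∧ G.Adj v u ∧ S u = m)).card
        = n m p := by
      intro m p
      rw [← hf p m, Finset.filter_filter]
      congr 1
      ext u
      simp only [mem_filter, mem_univ, true_and, hSdef]
      constructor
      · rintro ⟨hp, ha, h⟩; rw [if_pos ha, hp] at h; exact ⟨⟨hp, ha⟩, h⟩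
      · rintro ⟨⟨hp, ha⟩, h⟩; exact ⟨hp, ha, by rw [if_pos ha, hp]; exact h⟩
    have key2 : ∀ m p, (Finset.univ.filter (fun u => part u = p ∧ ¬ G.Adj v u ∧ S u = m)).card
        = s m p - n m p := by
      intro m p
      rw [← hg p m, Finset.filter_filter]
      congr 1
      ext u
      simp only [mem_filter, mem_univ, true_and, hSdef]
      constructor
      · rintro ⟨hp, ha, h⟩; rw [if_neg ha, hp] at h; exact ⟨⟨hp, ha⟩, h⟩
      · rintro ⟨⟨hp, ha⟩, h⟩; exact ⟨hp, ha, by rw [if_neg ha, hp]; exact h⟩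
    refine ⟨S, ?_, ?_⟩
    · simp only [lumpCell, mem_filter, mem_univ, true_and]
      intro m p
      have hsplit := Finset.card_filter_add_card_filter_not
        (s := Finset.univ.filter (fun u => part u = p ∧ S u = m)) (p := fun u => G.Adj v u)
      rw [Finset.filter_filter, Finset.filter_filter] at hsplit
      have e1 : (Finset.univ.filter (fun u => (part u = p ∧ S u = m) ∧ G.Adj v u)).card
          = n m p := by
        rw [← key1 m p]; congr 1; ext u; simp; tauto
      have e2 : (Finset.univ.filter (fun u => (part u = p ∧ S u = m) ∧ ¬ G.Adj v u)).card
          = s m p - n m p := by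
        rw [← key2 m p]; congr 1; ext u; simp; tauto
      have := hle m p
      omega
    · intro m p
      rw [← key1 m p]
      congr 1
      ext u
      simp only [mem_filter, SimpleGraph.mem_neighborFinset, mem_univ, true_and]
      tauto
end

section
/- Let s be a macrostate for the partition Π_V, let v ∈ V, and let n be a neighbourhood count for v (a matrix n ∈ ℤ_{≥0}^{M×P} with Σ_m n_{m,p} = d^v_p for every p). Then n is realisable in the lumping cell of s — i.e., there exists a microstate S in the lumping cell of s such that for every m and p the number of neighbours of v in V_p with S-state W_m equals n_{m,p} — if and only if ∏_{p=1}^P A(s_p, n_p) > 0, where s_p and n_p denote the p-th columns of s and n. -/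
open Finset

/-- Existence of a function with prescribed fiber sizes on a finset. -/
lemma exists_prescribed_fibers {V : Type} [DecidableEq V] {M : ℕ} (hM : 0 < M) :
    ∀ (t : ℕ) (A : Finset V) (a : Fin M → ℕ), A.card = t → (∑ m, a m) = t →
    ∃ f : V → Fin M, ∀ m, (A.filter (fun x => f x = m)).card = a m := by
  intro t
  induction t with
  | zero =>
    intro A a hA ha
    refine ⟨fun _ => ⟨0, hM⟩, fun m => ?_⟩
    rw [Finset.card_eq_zero] at hA
    subst hA
    simp [(Finset.sum_eq_zero_iff.mp ha m (mem_univ m)).symm]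
  | succ t ih =>
    intro A a hA ha
    have hA' : A.Nonempty := by rw [← Finset.card_pos, hA]; omega
    obtain ⟨x, hx⟩ := hA'
    have hm0 : ∃ m0, a m0 ≠ 0 := by
      by_contra h; push_neg at h
      simp [h] at ha
    obtain ⟨m0, hm0⟩ := hm0
    have hsplit : ∑ m ∈ univ.erase m0, a m + a m0 = t + 1 := by
      rw [Finset.sum_erase_add univ a (mem_univ m0)]; exact ha
    have hcard' : (A.erase x).card = t := by
      rw [Finset.card_erase_of_mem hx, hA]
      omega
    have hsum' : ∑ m, Function.update a m0 (a m0 - 1) m = t := by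
      have h1 := Finset.sum_erase_add univ (Function.update a m0 (a m0 - 1)) (mem_univ m0)
      have h2 : ∑ m ∈ univ.erase m0, Function.update a m0 (a m0 - 1) m
          = ∑ m ∈ univ.erase m0, a m :=
        Finset.sum_congr rfl (fun m hm => by
          rw [Function.update_of_ne (Finset.ne_of_mem_erase hm)])
      rw [h2, Function.update_self] at h1
      omega
    obtain ⟨f, hf⟩ := ih (A.erase x) _ hcard' hsum'
    refine ⟨Function.update f x m0, fun m => ?_⟩
    have hAeq : A = insert x (A.erase x) := (Finset.insert_erase hx).symm
    have hfc : (A.erase x).filter (fun y => Function.update f x m0 y = m)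
        = (A.erase x).filter (fun y => f y = m) := by
      apply Finset.filter_congr
      intro y hy
      rw [Function.update_of_ne (Finset.ne_of_mem_erase hy)]
    rw [hAeq, Finset.filter_insert, hfc]
    by_cases hmm : m = m0
    · subst hmm
      rw [if_pos (Function.update_self x m f)]
      rw [Finset.card_insert_of_notMem (fun h => (Finset.mem_erase.mp (Finset.mem_of_mem_filter x h)).1 rfl)]
      rw [hf]
      simp only [Function.update_self]
      omega
    · rw [if_neg (by rw [Function.update_self]; exact fun h => hmm h.symm)]
      rw [hf, Function.update_of_ne hmm]

lemma Afun_pos_iff {M : ℕ} (s n : Fin M → ℕ) :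
    0 < Afun (fun m => (s m : ℤ)) (fun m => (n m : ℤ)) ↔ ∀ m, n m ≤ s m := by
  unfold Afun multinomZ
  rw [if_pos ⟨fun m => Int.ofNat_nonneg (n m), rfl⟩]
  by_cases h : ∀ m, n m ≤ s m
  · rw [if_pos ⟨fun m => by simpa using sub_nonneg.mpr (Int.ofNat_le.mpr (h m)),
      by rw [Finset.sum_sub_distrib]⟩]
    exact iff_of_true (Nat.mul_pos (Nat.multinomial_pos _ _) (Nat.multinomial_pos _ _)) h
  · rw [if_neg]
    · simp [h]
    · rintro ⟨h1, -⟩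
      apply h
      intro m
      have := h1 m
      simp only [sub_nonneg, Nat.cast_le] at this
      exact this

/-- **Corollary 5.3 of the paper.** A neighbourhood count `n` for a vertex `v`
(with column sums `Σ_m n_{m,p} = d^v_p`) is realisable in the lumping cell of the
macrostate `s` if and only if `∏_{p=1}^P A(s_p, n_p) > 0`. -/
theorem realisable_iff_prod_pos
    (V : Type) [Fintype V] [DecidableEq V]
    (G : SimpleGraph V) [DecidableRel G.Adj]
    (M P : ℕ) (hM : 1 ≤ M) (hP : 1 ≤ P)
    (part : V → Fin P) (hpart : ∀ p, ∃ v, part v = p)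
    (s : Fin M → Fin P → ℕ)
    (hs : ∀ p, ∑ m, s m p = Ncell part p)
    (v : V) (n : Fin M → Fin P → ℕ)
    (hn : ∀ p, ∑ m, n m p = dOf G part v p) :
    (∃ S ∈ lumpCell part s, ∀ m p,
        ((G.neighborFinset v).filter (fun u => part u = p ∧ S u = m)).card = n m p)
      ↔ 0 < ∏ p, Afun (fun m => (s m p : ℤ)) (fun m => (n m p : ℤ)) := by
  have hprod : (0 < ∏ p, Afun (fun m => (s m p : ℤ)) (fun m => (n m p : ℤ)))
      ↔ ∀ p m, n m p ≤ s m p := by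
    rw [CanonicallyOrderedAdd.prod_pos]
    constructor
    · intro h p
      exact (Afun_pos_iff (fun m => s m p) (fun m => n m p)).mp (h p (mem_univ p))
    · intro h p _
      exact (Afun_pos_iff (fun m => s m p) (fun m => n m p)).mpr (h p)
  rw [hprod]
  constructor
  · rintro ⟨S, hS, hSc⟩ p m
    rw [lumpCell, Finset.mem_filter] at hS
    rw [← hSc m p, ← hS.2 m p]
    exact Finset.card_le_card (Finset.filter_subset_filter _ (Finset.subset_univ _))
  · intro hle
    -- B p : neighbours of v in cell p ; C p : non-neighbours in cell p
    set B : Fin P → Finset V := fun p => (G.neighborFinset v).filter (fun u => part u = p)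
      with hB
    set C : Fin P → Finset V := fun p =>
      (cellVerts part p).filter (fun u => u ∉ G.neighborFinset v) with hC
    have hCcard : ∀ p, (C p).card = Ncell part p - dOf G part v p := by
      intro p
      have hsplitc := Finset.card_filter_add_card_filter_not
        (s := cellVerts part p) (p := fun u => u ∈ G.neighborFinset v)
      have hBC : (cellVerts part p).filter (fun u => u ∈ G.neighborFinset v) = B p := by
        ext u
        simp [hB, cellVerts, and_comm]
      have hN : Ncell part p = (cellVerts part p).card := rfl
      have hD : dOf G part v p = (B p).card := rfl
      have hCC : C p = (cellVerts part p).filter (fun u => ¬ u ∈ G.neighborFinset v) := rfl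
      rw [hCC, hN, hD, ← hBC]
      omega
    choose fN hfN using fun p =>
      exists_prescribed_fibers (V := V) (Nat.lt_of_lt_of_le Nat.zero_lt_one hM)
        (dOf G part v p) (B p) (fun m => n m p) rfl (hn p)
    choose fC hfC using fun p =>
      exists_prescribed_fibers (V := V) (Nat.lt_of_lt_of_le Nat.zero_lt_one hM)
        (Ncell part p - dOf G part v p) (C p) (fun m => s m p - n m p) (hCcard p)
        (by
          show ∑ m : Fin M, (s m p - n m p) = Ncell part p - dOf G part v p
          rw [Finset.sum_tsub_distrib univ (fun m _ => hle p m), hs p, hn p])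
    set S : V → Fin M := fun u =>
      if u ∈ G.neighborFinset v then fN (part u) u else fC (part u) u with hSdef
    have hnbr : ∀ m p,
        ((G.neighborFinset v).filter (fun u => part u = p ∧ S u = m)).card = n m p := by
      intro m p
      have : (G.neighborFinset v).filter (fun u => part u = p ∧ S u = m)
          = (B p).filter (fun u => fN p u = m) := by
        ext u
        simp only [hB, Finset.mem_filter, hSdef]
        constructor
        · rintro ⟨hu, hup, hum⟩
          rw [if_pos hu, hup] at hum
          exact ⟨⟨hu, hup⟩, hum⟩
        · rintro ⟨⟨hu, hup⟩, hum⟩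
          refine ⟨hu, hup, ?_⟩
          rw [if_pos hu, hup]
          exact hum
      rw [this, hfN p m]
    refine ⟨S, ?_, hnbr⟩
    rw [lumpCell, Finset.mem_filter]
    refine ⟨mem_univ _, fun m p => ?_⟩
    have hsplit := Finset.card_filter_add_card_filter_not
      (s := Finset.univ.filter (fun u => part u = p ∧ S u = m))
      (p := fun u => u ∈ G.neighborFinset v)
    have h1 : (Finset.univ.filter (fun u => part u = p ∧ S u = m)).filter
        (fun u => u ∈ G.neighborFinset v)
        = (G.neighborFinset v).filter (fun u => part u = p ∧ S u = m) := by
      ext u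
      simp only [Finset.mem_filter, Finset.mem_univ, true_and]
      tauto
    have h2 : (Finset.univ.filter (fun u => part u = p ∧ S u = m)).filter
        (fun u => ¬ u ∈ G.neighborFinset v)
        = (C p).filter (fun u => fC p u = m) := by
      ext u
      simp only [hC, cellVerts, Finset.mem_filter, Finset.mem_univ, true_and, hSdef]
      constructor
      · rintro ⟨⟨hup, hum⟩, hu⟩
        rw [if_neg hu, hup] at hum
        exact ⟨⟨hup, hu⟩, hum⟩
      · rintro ⟨⟨hup, hu⟩, hum⟩
        refine ⟨⟨hup, ?_⟩, hu⟩
        rw [if_neg hu, hup]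
        exact hum
    rw [h1, h2, hnbr m p, hfC p m] at hsplit
    have hds : dOf G part v p ≤ Ncell part p := by
      rw [← hs p, ← hn p]
      exact Finset.sum_le_sum (fun m _ => hle p m)
    rw [← hsplit]
    have := hle p m
    have hns : n m p ≤ s m p := this
    omega
end
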